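/- arXiv:2308.12650 — 4 statements merged into one kernel-verified Lean document; each statement's English description precedes it below -/
import Mathlib

section
/- For n = 2 and β = a₁ + a₂ ≥ 1, the upper envelope of f over X ∩ W₁₂, i.e. the convex hull of the hypograph {(x,z) ∈ (X ∩ W₁₂) × ℝ : z ≤ f(x)}, equals H = {(x,z) ∈ ℝ₊² × ℝ : x ∈ Y, z − z₀ ≤ (γ x₁^{a₁} x₂^{a₂})^{1/β}, and z ≤ u}. -/
open Real Set

/-- Superadditivity of the Cobb–Douglas function with exponents summing to 1. -/
theorem aux_superadd {t x₁ x₂ y₁ y₂ : ℝ} (ht0 : 0 ≤ t) (ht1 : t ≤ 1)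
    (hx₁ : 0 ≤ x₁) (hx₂ : 0 ≤ x₂) (hy₁ : 0 ≤ y₁) (hy₂ : 0 ≤ y₂) :
    x₁ ^ t * x₂ ^ (1 - t) + y₁ ^ t * y₂ ^ (1 - t)
      ≤ (x₁ + y₁) ^ t * (x₂ + y₂) ^ (1 - t) := by
  rcases eq_or_lt_of_le ht0 with rfl | ht0'
  · simp [Real.rpow_zero]
  rcases eq_or_lt_of_le ht1 with rfl | ht1'
  · simp [Real.rpow_zero]
  set S₁ := x₁ + y₁ with hS₁
  set S₂ := x₂ + y₂ with hS₂
  rcases eq_or_lt_of_le (by positivity : (0:ℝ) ≤ S₁) with h1 | h1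
  · have hx : x₁ = 0 := by nlinarith
    have hy : y₁ = 0 := by nlinarith
    simp [hx, hy, Real.zero_rpow (ne_of_gt ht0'), ← h1]
  rcases eq_or_lt_of_le (by positivity : (0:ℝ) ≤ S₂) with h2 | h2
  · have hx : x₂ = 0 := by nlinarith
    have hy : y₂ = 0 := by nlinarith
    have h1t : (0:ℝ) < 1 - t := by linarith
    simp [hx, hy, Real.zero_rpow (ne_of_gt h1t), ← h2]
  have key : ∀ a b : ℝ, 0 ≤ a → 0 ≤ b →
      a ^ t * b ^ (1 - t) ≤ S₁ ^ t * S₂ ^ (1 - t) * (t * (a / S₁) + (1 - t) * (b / S₂)) := by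
    intro a b ha hb
    have h := Real.geom_mean_le_arith_mean2_weighted ht0 (by linarith : (0:ℝ) ≤ 1 - t)
      (div_nonneg ha h1.le) (div_nonneg hb h2.le) (by ring)
    calc a ^ t * b ^ (1 - t)
        = S₁ ^ t * S₂ ^ (1 - t) * ((a / S₁) ^ t * (b / S₂) ^ (1 - t)) := by
          rw [Real.div_rpow ha h1.le, Real.div_rpow hb h2.le]
          field_simp
      _ ≤ S₁ ^ t * S₂ ^ (1 - t) * (t * (a / S₁) + (1 - t) * (b / S₂)) := by
          apply mul_le_mul_of_nonneg_left h (by positivity)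
  have k1 := key x₁ x₂ hx₁ hx₂
  have k2 := key y₁ y₂ hy₁ hy₂
  have hsum : t * (x₁ / S₁) + (1 - t) * (x₂ / S₂) + (t * (y₁ / S₁) + (1 - t) * (y₂ / S₂)) = 1 := by
    field_simp
    ring
  nlinarith [Real.rpow_nonneg (le_of_lt h1) t, Real.rpow_nonneg (le_of_lt h2) (1-t),
    mul_pos (Real.rpow_pos_of_pos h1 t) (Real.rpow_pos_of_pos h2 (1-t))]

/-- The function `s ↦ d₂ s^(-a₂/β) - d₁ s^(a₁/β)` attains its maximum on `[p, q]` at the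
endpoint `p`. -/
theorem cap_core {a₁ a₂ p q β d₁ d₂ : ℝ} (ha₁ : 0 < a₁) (ha₂ : 0 < a₂) (hβ : β = a₁ + a₂)
    (hp : 0 < p) (hpq : p < q)
    (hd₁ : d₁ = q ^ (-(a₂ / β)) - p ^ (-(a₂ / β)))
    (hd₂ : d₂ = q ^ (a₁ / β) - p ^ (a₁ / β))
    {s : ℝ} (hps : p ≤ s) (hsq : s ≤ q) :
    d₂ * s ^ (-(a₂ / β)) - d₁ * s ^ (a₁ / β)
      ≤ d₂ * p ^ (-(a₂ / β)) - d₁ * p ^ (a₁ / β) := by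
  have hβ0 : 0 < β := by rw [hβ]; linarith
  have hq : 0 < q := lt_trans hp hpq
  have hs : 0 < s := lt_of_lt_of_le hp hps
  have hc0 : 0 < a₂ / β := by positivity
  have hc1 : a₂ / β < 1 := by rw [div_lt_one hβ0]; linarith [hβ]
  have hsum1 : a₁ / β + a₂ / β = 1 := by field_simp [hβ]; linarith
  have hsplit : ∀ w : ℝ, 0 < w → w ^ (a₁ / β) = w * w ^ (-(a₂ / β)) := by
    intro w hw
    have h1 : a₁ / β = 1 + -(a₂ / β) := by linarith
    rw [h1, Real.rpow_add hw, Real.rpow_one]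
  have hinv : ∀ w : ℝ, 0 < w → w ^ (-(a₂ / β)) * w ^ (a₂ / β) = 1 := by
    intro w hw
    rw [← Real.rpow_add hw, neg_add_cancel, Real.rpow_zero]
  have hd₁neg : d₁ < 0 := by
    rw [hd₁, sub_neg]
    exact Real.rpow_lt_rpow_of_neg hp hpq (by linarith)
  have hd₂pos : 0 < d₂ := by
    rw [hd₂, sub_pos]
    exact Real.rpow_lt_rpow hp.le hpq (by positivity)
  set K := d₂ * p ^ (-(a₂ / β)) - d₁ * p ^ (a₁ / β) with hK
  have hApos : (0:ℝ) < p ^ (-(a₂ / β)) := Real.rpow_pos_of_pos hp _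
  have hA'pos : (0:ℝ) < p ^ (a₁ / β) := Real.rpow_pos_of_pos hp _
  have hKpos : 0 < K := by
    rw [hK]; nlinarith [mul_pos hd₂pos hApos, mul_pos (neg_pos.2 hd₁neg) hA'pos]
  have hKp : K * p ^ (a₂ / β) = d₂ - d₁ * p := by
    rw [hK, hsplit p hp]
    have h1 := hinv p hp
    linear_combination (d₂ - d₁ * p) * h1
  have hKq : K * q ^ (a₂ / β) = d₂ - d₁ * q := by
    rw [hK, hd₁, hd₂, hsplit q hq, hsplit p hp]
    have h1 := hinv q hq
    linear_combination (p ^ (-(a₂ / β)) * (q - p)) * h1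
  clear_value K
  set θ := (q - s) / (q - p) with hθ
  have hqp : 0 < q - p := by linarith
  have hθ0 : 0 ≤ θ := by apply div_nonneg <;> linarith
  have hθ1 : 0 ≤ 1 - θ := by
    rw [hθ]; rw [sub_nonneg, div_le_one hqp]; linarith
  have hsθ : θ * p + (1 - θ) * q = s := by
    rw [hθ]; field_simp; ring
  clear_value θ
  have hconc := (Real.concaveOn_rpow hc0.le hc1.le).2 (mem_Ici.2 hp.le) (mem_Ici.2 hq.le)
    hθ0 hθ1 (by ring)
  simp only [smul_eq_mul, hsθ] at hconc
  have hlin : d₂ - d₁ * s ≤ K * s ^ (a₂ / β) := by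
    calc d₂ - d₁ * s = θ * (K * p ^ (a₂ / β)) + (1 - θ) * (K * q ^ (a₂ / β)) := by
          rw [hKp, hKq]; linear_combination d₁ * hsθ
      _ = K * (θ * p ^ (a₂ / β) + (1 - θ) * q ^ (a₂ / β)) := by ring
      _ ≤ K * s ^ (a₂ / β) := by
          exact mul_le_mul_of_nonneg_left hconc hKpos.le
  have := mul_le_mul_of_nonneg_left hlin (le_of_lt (Real.rpow_pos_of_pos hs (-(a₂ / β))))
  have hsinv := hinv s hs
  calc d₂ * s ^ (-(a₂ / β)) - d₁ * s ^ (a₁ / β)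
      = s ^ (-(a₂ / β)) * (d₂ - d₁ * s) := by rw [hsplit s hs]; ring
    _ ≤ s ^ (-(a₂ / β)) * (K * s ^ (a₂ / β)) := this
    _ = K := by linear_combination K * hsinv

/-- The chord line of `t ↦ t^β` through the level values `ℓ` and `u`. -/
theorem chord_id {β ℓ u γ z₀ : ℝ} (hβ0 : 0 < β) (hℓ : 0 < ℓ) (hℓu : ℓ < u)
    (hz₀ : z₀ = (u ^ (1 / β) * ℓ - ℓ ^ (1 / β) * u) / (u ^ (1 / β) - ℓ ^ (1 / β)))
    (hγ : γ = ((u - ℓ) / (u ^ (1 / β) - ℓ ^ (1 / β))) ^ β)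
    {F : ℝ} (hF : 0 ≤ F) :
    z₀ + (γ * F) ^ (1 / β) =
      ((u ^ (1 / β) - F ^ (1 / β)) * ℓ + (F ^ (1 / β) - ℓ ^ (1 / β)) * u) /
        (u ^ (1 / β) - ℓ ^ (1 / β)) := by
  have hden : 0 < u ^ (1 / β) - ℓ ^ (1 / β) := by
    rw [sub_pos]
    exact Real.rpow_lt_rpow hℓ.le hℓu (by positivity)
  have hG : 0 < (u - ℓ) / (u ^ (1 / β) - ℓ ^ (1 / β)) := by
    apply div_pos (by linarith) hden
  have hγ1β : γ ^ (1 / β) = (u - ℓ) / (u ^ (1 / β) - ℓ ^ (1 / β)) := by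
    rw [hγ, ← Real.rpow_mul hG.le, mul_one_div_cancel hβ0.ne', Real.rpow_one]
  have hγ0 : 0 ≤ γ := by rw [hγ]; positivity
  rw [Real.mul_rpow hγ0 hF, hγ1β, hz₀]
  field_simp
  ring

/-- Points of the graph between the two level sets lie below the chord line. -/
theorem chord_ge {β ℓ u γ z₀ : ℝ} (hβ0 : 0 < β) (hβ1 : 1 ≤ β) (hℓ : 0 < ℓ) (hℓu : ℓ < u)
    (hz₀ : z₀ = (u ^ (1 / β) * ℓ - ℓ ^ (1 / β) * u) / (u ^ (1 / β) - ℓ ^ (1 / β)))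
    (hγ : γ = ((u - ℓ) / (u ^ (1 / β) - ℓ ^ (1 / β))) ^ β)
    {F : ℝ} (hFl : ℓ ≤ F) (hFu : F ≤ u) :
    F ≤ z₀ + (γ * F) ^ (1 / β) := by
  have hF : 0 < F := lt_of_lt_of_le hℓ hFl
  have hden : 0 < u ^ (1 / β) - ℓ ^ (1 / β) := by
    rw [sub_pos]
    exact Real.rpow_lt_rpow hℓ.le hℓu (by positivity)
  have htl : ℓ ^ (1 / β) ≤ F ^ (1 / β) := Real.rpow_le_rpow hℓ.le hFl (by positivity)
  have htu : F ^ (1 / β) ≤ u ^ (1 / β) := Real.rpow_le_rpow hF.le hFu (by positivity)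
  set t := F ^ (1 / β) with ht
  set θ := (u ^ (1 / β) - t) / (u ^ (1 / β) - ℓ ^ (1 / β)) with hθ
  have hθ0 : 0 ≤ θ := by apply div_nonneg <;> linarith
  have hθ1 : 0 ≤ 1 - θ := by
    rw [hθ, sub_nonneg, div_le_one hden]; linarith
  have htcomb : θ * ℓ ^ (1 / β) + (1 - θ) * u ^ (1 / β) = t := by
    rw [hθ]; field_simp; ring
  have hback : ∀ w : ℝ, 0 < w → (w ^ (1 / β)) ^ β = w := by
    intro w hw
    rw [← Real.rpow_mul hw.le, one_div_mul_cancel hβ0.ne', Real.rpow_one]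
  have hconv := (convexOn_rpow hβ1).2
    (show ℓ ^ (1 / β) ∈ Ici (0:ℝ) from mem_Ici.2 (Real.rpow_nonneg hℓ.le _))
    (show u ^ (1 / β) ∈ Ici (0:ℝ) from mem_Ici.2 (Real.rpow_nonneg (by linarith) _))
    hθ0 hθ1 (by ring)
  simp only [smul_eq_mul, htcomb, hback ℓ hℓ, hback u (by linarith), hback F hF] at hconv
  rw [chord_id hβ0 hℓ hℓu hz₀ hγ hF.le]
  calc F ≤ θ * ℓ + (1 - θ) * u := by rw [ht] at hconv; rw [hback F hF] at hconv; exact hconv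
    _ = ((u ^ (1 / β) - t) * ℓ + (t - ℓ ^ (1 / β)) * u) / (u ^ (1 / β) - ℓ ^ (1 / β)) := by
        rw [hθ]; field_simp; ring

set_option maxHeartbeats 2000000 in
/-- For `n = 2` and `β = a₁ + a₂ ≥ 1`, the upper envelope of `f` over
`X ∩ W₁₂` equals `H = {(x,z) : x ∈ Y, z − z₀ ≤ (γ x₁^{a₁} x₂^{a₂})^{1/β}, z ≤ u}`. -/
theorem upper_envelope_n2_of_one_le_beta (a₁ a₂ ℓ u p q β d₁ d₂ lam z₀ γ : ℝ)
    (ha₁ : 0 < a₁) (ha₂ : 0 < a₂) (hβ : β = a₁ + a₂) (hβ1 : 1 ≤ β)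
    (hℓ : 0 < ℓ) (hℓu : ℓ < u) (hp : 0 < p) (hpq : p < q)
    (hd₁ : d₁ = q ^ (-(a₂ / β)) - p ^ (-(a₂ / β)))
    (hd₂ : d₂ = q ^ (a₁ / β) - p ^ (a₁ / β))
    (hlam : lam = p ^ a₂ / (d₂ - d₁ * p) ^ β)
    (hz₀ : z₀ = (u ^ (1 / β) * ℓ - ℓ ^ (1 / β) * u) / (u ^ (1 / β) - ℓ ^ (1 / β)))
    (hγ : γ = ((u - ℓ) / (u ^ (1 / β) - ℓ ^ (1 / β))) ^ β) :
    convexHull ℝ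
      {xz : (ℝ × ℝ) × ℝ |
        ((0 ≤ xz.1.1 ∧ 0 ≤ xz.1.2) ∧
          (ℓ ≤ xz.1.1 ^ a₁ * xz.1.2 ^ a₂ ∧ xz.1.1 ^ a₁ * xz.1.2 ^ a₂ ≤ u) ∧
          (p * xz.1.1 ≤ xz.1.2 ∧ xz.1.2 ≤ q * xz.1.1)) ∧
        xz.2 ≤ xz.1.1 ^ a₁ * xz.1.2 ^ a₂} =
    {xz : (ℝ × ℝ) × ℝ |
        ((0 ≤ xz.1.1 ∧ 0 ≤ xz.1.2) ∧
          (p * xz.1.1 ≤ xz.1.2 ∧ xz.1.2 ≤ q * xz.1.1) ∧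
          ℓ ≤ xz.1.1 ^ a₁ * xz.1.2 ^ a₂ ∧
          d₂ * xz.1.1 - d₁ * xz.1.2 ≤ (u / lam) ^ (1 / β)) ∧
        xz.2 - z₀ ≤ (γ * (xz.1.1 ^ a₁ * xz.1.2 ^ a₂)) ^ (1 / β) ∧
        xz.2 ≤ u} := by
  -- ==================== basic facts ====================
  have hβ0 : 0 < β := by rw [hβ]; linarith
  have hu : 0 < u := lt_trans hℓ hℓu
  have hq : 0 < q := lt_trans hp hpq
  have hd₁neg : d₁ < 0 := by
    rw [hd₁, sub_neg]
    refine Real.rpow_lt_rpow_of_neg hp hpq ?_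
    have : 0 < a₂ / β := by positivity
    linarith
  have hd₂pos : 0 < d₂ := by
    rw [hd₂, sub_pos]
    exact Real.rpow_lt_rpow hp.le hpq (by positivity)
  have hD : 0 < d₂ - d₁ * p := by
    have := mul_pos (neg_pos.2 hd₁neg) hp; linarith
  have hsplit : ∀ w : ℝ, 0 < w → w ^ (a₁ / β) = w * w ^ (-(a₂ / β)) := by
    intro w hw
    have h1 : a₁ / β = 1 + -(a₂ / β) := by field_simp; linarith [hβ]
    rw [h1, Real.rpow_add hw, Real.rpow_one]
  have hback : ∀ w : ℝ, 0 ≤ w → (w ^ (1 / β)) ^ β = w := by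
    intro w hw
    rw [← Real.rpow_mul hw, one_div_mul_cancel hβ0.ne', Real.rpow_one]
  have hfwd : ∀ w : ℝ, 0 ≤ w → (w ^ β) ^ (1 / β) = w := by
    intro w hw
    rw [← Real.rpow_mul hw, mul_one_div_cancel hβ0.ne', Real.rpow_one]
  have hU : 0 < u ^ (1 / β) := Real.rpow_pos_of_pos hu _
  set K := d₂ * p ^ (-(a₂ / β)) - d₁ * p ^ (a₁ / β) with hK
  have hKpos : 0 < K := by
    rw [hK]
    nlinarith [mul_pos hd₂pos (Real.rpow_pos_of_pos hp (-(a₂/β))),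
      mul_pos (neg_pos.2 hd₁neg) (Real.rpow_pos_of_pos hp (a₁/β))]
  -- (u/lam)^(1/β) = u^(1/β) * K
  have hPa : (0:ℝ) < p ^ a₂ := Real.rpow_pos_of_pos hp a₂
  have hKD : K = (d₂ - d₁ * p) * p ^ (-(a₂ / β)) := by rw [hK, hsplit p hp]; ring
  have hcap_eq : (u / lam) ^ (1 / β) = u ^ (1 / β) * K := by
    have h1 : u / lam = u * ((d₂ - d₁ * p) ^ β / p ^ a₂) := by
      rw [hlam]; field_simp
    rw [h1, Real.mul_rpow hu.le (by positivity),
      Real.div_rpow (Real.rpow_nonneg hD.le β) hPa.le, hfwd _ hD.le,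
      ← Real.rpow_mul hp.le, show a₂ * (1/β) = a₂/β from by ring, hKD,
      Real.rpow_neg hp.le]
    ring
  clear_value K
  -- exponent t = a₁/β
  have ht0 : (0:ℝ) < a₁ / β := by positivity
  have ht1 : a₁ / β < 1 := by rw [div_lt_one hβ0]; linarith [hβ]
  have hsum1 : a₂ / β = 1 - a₁ / β := by field_simp [hβ]; linarith
  -- splitting of f^(1/β)
  have hsplitf : ∀ w₁ w₂ : ℝ, 0 ≤ w₁ → 0 ≤ w₂ →
      (w₁ ^ a₁ * w₂ ^ a₂) ^ (1 / β) = w₁ ^ (a₁ / β) * w₂ ^ (1 - a₁ / β) := by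
    intro w₁ w₂ hw₁ hw₂
    rw [Real.mul_rpow (Real.rpow_nonneg hw₁ _) (Real.rpow_nonneg hw₂ _),
      ← Real.rpow_mul hw₁, ← Real.rpow_mul hw₂,
      show a₁ * (1/β) = a₁/β from by ring, show a₂ * (1/β) = a₂/β from by ring, hsum1]
  -- scaling of the Cobb-Douglas with exponents summing to one
  have hscale : ∀ c w₁ w₂ : ℝ, 0 ≤ c → 0 ≤ w₁ → 0 ≤ w₂ →
      (c * w₁) ^ (a₁ / β) * (c * w₂) ^ (1 - a₁ / β)
        = c * (w₁ ^ (a₁ / β) * w₂ ^ (1 - a₁ / β)) := by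
    intro c w₁ w₂ hc hw₁ hw₂
    rw [Real.mul_rpow hc hw₁, Real.mul_rpow hc hw₂]
    have : c ^ (a₁ / β) * c ^ (1 - a₁ / β) = c := by
      rw [← Real.rpow_add' hc (by norm_num), add_sub_cancel, Real.rpow_one]
    calc c ^ (a₁/β) * w₁ ^ (a₁/β) * (c ^ (1 - a₁/β) * w₂ ^ (1 - a₁/β))
        = (c ^ (a₁/β) * c ^ (1 - a₁/β)) * (w₁ ^ (a₁/β) * w₂ ^ (1 - a₁/β)) := by ring
      _ = c * (w₁ ^ (a₁/β) * w₂ ^ (1 - a₁/β)) := by rw [this]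
  have hγ0 : 0 ≤ γ := by
    rw [hγ]
    have hden : 0 < u ^ (1 / β) - ℓ ^ (1 / β) := by
      rw [sub_pos]; exact Real.rpow_lt_rpow hℓ.le hℓu (by positivity)
    exact Real.rpow_nonneg (div_nonneg (by linarith) hden.le) β
  apply Set.Subset.antisymm
  · -- ================= convexHull S ⊆ H =================
    apply convexHull_min
    · -- S ⊆ H
      rintro ⟨⟨x₁, x₂⟩, z⟩ ⟨⟨⟨hx1, hx2⟩, ⟨hfl, hfu⟩, hc1, hc2⟩, hz⟩
      simp only [Set.mem_setOf_eq] at *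
      refine ⟨⟨⟨hx1, hx2⟩, ⟨hc1, hc2⟩, hfl, ?_⟩, ?_, ?_⟩
      · -- linear cap
        rcases eq_or_lt_of_le hx1 with h0 | hx1pos
        · have hx20 : x₂ = 0 := le_antisymm (by rw [← h0] at hc2; simpa using hc2) hx2
          rw [← h0, hx20, hcap_eq]
          linarith [mul_pos hU hKpos]
        · set s := x₂ / x₁ with hs
          have hx2pos : 0 < x₂ := lt_of_lt_of_le (by positivity) hc1
          have hspos : 0 < s := by rw [hs]; positivity
          have hsx : x₂ = s * x₁ := by rw [hs]; field_simp
          have hps : p ≤ s := by rw [hs, le_div_iff₀ hx1pos]; linarith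
          have hsq : s ≤ q := by rw [hs, div_le_iff₀ hx1pos]; linarith
          have hFs : x₁ ^ a₁ * x₂ ^ a₂ = x₁ ^ β * s ^ a₂ := by
            rw [hsx, Real.mul_rpow hspos.le hx1pos.le, hβ, Real.rpow_add hx1pos]
            ring
          have hsa : 0 < s ^ a₂ := Real.rpow_pos_of_pos hspos a₂
          have hx1b : x₁ ≤ u ^ (1/β) * s ^ (-(a₂/β)) := by
            have h2 : x₁ ^ β ≤ u / s ^ a₂ := by
              rw [le_div_iff₀ hsa, ← hFs]; exact hfu
            calc x₁ = (x₁ ^ β) ^ (1/β) := (hfwd x₁ hx1pos.le).symm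
              _ ≤ (u / s ^ a₂) ^ (1/β) :=
                  Real.rpow_le_rpow (Real.rpow_nonneg hx1pos.le β) h2 (by positivity)
              _ = u ^ (1/β) * s ^ (-(a₂/β)) := by
                  rw [Real.div_rpow hu.le hsa.le, ← Real.rpow_mul hspos.le,
                    show a₂ * (1/β) = a₂/β from by ring, Real.rpow_neg hspos.le,
                    div_eq_mul_inv]
          have hds : 0 < d₂ - d₁ * s := by
            have := mul_pos (neg_pos.2 hd₁neg) hspos; linarith
          calc d₂ * x₁ - d₁ * x₂ = x₁ * (d₂ - d₁ * s) := by rw [hsx]; ring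
            _ ≤ (u ^ (1/β) * s ^ (-(a₂/β))) * (d₂ - d₁ * s) :=
                mul_le_mul_of_nonneg_right hx1b hds.le
            _ = u ^ (1/β) * (d₂ * s ^ (-(a₂/β)) - d₁ * s ^ (a₁/β)) := by
                rw [hsplit s hspos]; ring
            _ ≤ u ^ (1/β) * K := by
                rw [hK]
                exact mul_le_mul_of_nonneg_left
                  (cap_core ha₁ ha₂ hβ hp hpq hd₁ hd₂ hps hsq) hU.le
            _ = (u / lam) ^ (1/β) := hcap_eq.symm
      · -- chord bound
        have := chord_ge hβ0 hβ1 hℓ hℓu hz₀ hγ hfl hfu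
        linarith
      · linarith
    · -- H is convex
      rintro ⟨⟨x₁, x₂⟩, zx⟩ ⟨⟨⟨hx1, hx2⟩, ⟨hxc1, hxc2⟩, hxl, hxcap⟩, hxz, hxzu⟩
        ⟨⟨y₁, y₂⟩, zy⟩ ⟨⟨⟨hy1, hy2⟩, ⟨hyc1, hyc2⟩, hyl, hycap⟩, hyz, hyzu⟩ a b ha hb hab
      simp only [Set.mem_setOf_eq, Prod.smul_mk, Prod.mk_add_mk, smul_eq_mul] at *
      have hC1 : 0 ≤ a * x₁ + b * y₁ := by positivity
      have hC2 : 0 ≤ a * x₂ + b * y₂ := by positivity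
      -- key superadditivity estimate
      have hkey : a * (x₁ ^ (a₁/β) * x₂ ^ (1 - a₁/β)) + b * (y₁ ^ (a₁/β) * y₂ ^ (1 - a₁/β))
          ≤ (a * x₁ + b * y₁) ^ (a₁/β) * (a * x₂ + b * y₂) ^ (1 - a₁/β) := by
        rw [← hscale a x₁ x₂ ha hx1 hx2, ← hscale b y₁ y₂ hb hy1 hy2]
        exact aux_superadd ht0.le ht1.le (by positivity) (by positivity)
          (by positivity) (by positivity)
      have habmul : ∀ w : ℝ, a * w + b * w = w := by
        intro w; rw [← add_mul, hab, one_mul]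
      refine ⟨⟨⟨hC1, hC2⟩, ⟨?_, ?_⟩, ?_, ?_⟩, ?_, ?_⟩
      · linarith [mul_le_mul_of_nonneg_left hxc1 ha, mul_le_mul_of_nonneg_left hyc1 hb]
      · linarith [mul_le_mul_of_nonneg_left hxc2 ha, mul_le_mul_of_nonneg_left hyc2 hb]
      · -- ℓ ≤ f(combination)
        have hxg : ℓ ^ (1/β) ≤ x₁ ^ (a₁/β) * x₂ ^ (1 - a₁/β) := by
          rw [← hsplitf x₁ x₂ hx1 hx2]
          exact Real.rpow_le_rpow hℓ.le hxl (by positivity)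
        have hyg : ℓ ^ (1/β) ≤ y₁ ^ (a₁/β) * y₂ ^ (1 - a₁/β) := by
          rw [← hsplitf y₁ y₂ hy1 hy2]
          exact Real.rpow_le_rpow hℓ.le hyl (by positivity)
        have hg : ℓ ^ (1/β) ≤ ((a * x₁ + b * y₁) ^ a₁ * (a * x₂ + b * y₂) ^ a₂) ^ (1/β) := by
          rw [hsplitf _ _ hC1 hC2]
          linarith [mul_le_mul_of_nonneg_left hxg ha, mul_le_mul_of_nonneg_left hyg hb,
            hkey, habmul (ℓ ^ (1/β))]
        calc ℓ = (ℓ ^ (1/β)) ^ β := (hback ℓ hℓ.le).symm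
          _ ≤ (((a * x₁ + b * y₁) ^ a₁ * (a * x₂ + b * y₂) ^ a₂) ^ (1/β)) ^ β :=
              Real.rpow_le_rpow (Real.rpow_nonneg hℓ.le _) hg hβ0.le
          _ = (a * x₁ + b * y₁) ^ a₁ * (a * x₂ + b * y₂) ^ a₂ := by
              apply hback
              positivity
      · -- linear cap
        linarith [mul_le_mul_of_nonneg_left hxcap ha, mul_le_mul_of_nonneg_left hycap hb,
          habmul ((u / lam) ^ (1 / β))]
      · -- chord bound for the combination
        have hsx : zx - z₀ ≤ γ ^ (1/β) * (x₁ ^ (a₁/β) * x₂ ^ (1 - a₁/β)) := by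
          rw [← hsplitf x₁ x₂ hx1 hx2, ← Real.mul_rpow hγ0 (by positivity)]
          exact hxz
        have hsy : zy - z₀ ≤ γ ^ (1/β) * (y₁ ^ (a₁/β) * y₂ ^ (1 - a₁/β)) := by
          rw [← hsplitf y₁ y₂ hy1 hy2, ← Real.mul_rpow hγ0 (by positivity)]
          exact hyz
        have hγβ : 0 ≤ γ ^ (1/β) := Real.rpow_nonneg hγ0 _
        have h1 : a * zx + b * zy - z₀
            ≤ γ ^ (1/β) * ((a * x₁ + b * y₁) ^ (a₁/β) * (a * x₂ + b * y₂) ^ (1 - a₁/β)) := by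
          have hk2 := mul_le_mul_of_nonneg_left hkey hγβ
          have hax := mul_le_mul_of_nonneg_left hsx ha
          have hbx := mul_le_mul_of_nonneg_left hsy hb
          ring_nf at hk2 hax hbx ⊢
          linarith [habmul z₀]
        calc a * zx + b * zy - z₀
            ≤ γ ^ (1/β) * ((a * x₁ + b * y₁) ^ (a₁/β) * (a * x₂ + b * y₂) ^ (1 - a₁/β)) := h1
          _ = (γ * ((a * x₁ + b * y₁) ^ a₁ * (a * x₂ + b * y₂) ^ a₂)) ^ (1/β) := by
              rw [Real.mul_rpow hγ0 (by positivity), hsplitf _ _ hC1 hC2]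
      · linarith [mul_le_mul_of_nonneg_left hxzu ha, mul_le_mul_of_nonneg_left hyzu hb,
          habmul u]
  · -- ================= H ⊆ convexHull S =================
    rintro ⟨⟨x₁, x₂⟩, z⟩ ⟨⟨⟨hx1, hx2⟩, ⟨hc1, hc2⟩, hfl, hcap⟩, hzb, hzu⟩
    dsimp only at hx1 hx2 hc1 hc2 hfl hcap hzb hzu
    have hF0 : 0 < x₁ ^ a₁ * x₂ ^ a₂ := lt_of_lt_of_le hℓ hfl
    have hx1pos : 0 < x₁ := by
      rcases eq_or_lt_of_le hx1 with h0 | h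
      · exfalso
        have hx20 : x₂ = 0 := le_antisymm (by rw [← h0] at hc2; simpa using hc2) hx2
        rw [← h0, hx20] at hF0
        simp [Real.zero_rpow ha₁.ne'] at hF0
      · exact h
    have hx2pos : 0 < x₂ := lt_of_lt_of_le (mul_pos hp hx1pos) hc1
    have hden : 0 < u ^ (1/β) - ℓ ^ (1/β) := by
      rw [sub_pos]; exact Real.rpow_lt_rpow hℓ.le hℓu (by positivity)
    -- scaling of the full Cobb-Douglas
    have hfscale : ∀ c : ℝ, 0 ≤ c →
        (c * x₁) ^ a₁ * (c * x₂) ^ a₂ = c ^ β * (x₁ ^ a₁ * x₂ ^ a₂) := by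
      intro c hc
      have hcc : c ^ a₁ * c ^ a₂ = c ^ β := by
        rw [hβ]
        exact (Real.rpow_add' hc (by positivity : (0:ℝ) < a₁ + a₂).ne').symm
      rw [Real.mul_rpow hc hx1, Real.mul_rpow hc hx2]
      linear_combination (x₁ ^ a₁ * x₂ ^ a₂) * hcc
    by_cases hFu : x₁ ^ a₁ * x₂ ^ a₂ ≤ u
    · -- ===== Case A : the point lies between the two level sets =====
      set F := x₁ ^ a₁ * x₂ ^ a₂ with hF
      have hFpos : 0 < F := hF0
      have htl : ℓ ^ (1/β) ≤ F ^ (1/β) := Real.rpow_le_rpow hℓ.le hfl (by positivity)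
      have htu : F ^ (1/β) ≤ u ^ (1/β) := Real.rpow_le_rpow hFpos.le hFu (by positivity)
      have hFb : 0 < F ^ (1/β) := Real.rpow_pos_of_pos hFpos _
      set θ := (u ^ (1/β) - F ^ (1/β)) / (u ^ (1/β) - ℓ ^ (1/β)) with hθ
      have hθ0 : 0 ≤ θ := by rw [hθ]; apply div_nonneg <;> linarith
      have hθ1 : 0 ≤ 1 - θ := by rw [hθ, sub_nonneg, div_le_one hden]; linarith
      set t₁ := (ℓ / F) ^ (1/β) with ht₁
      set t₂ := (u / F) ^ (1/β) with ht₂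
      have ht₁v : t₁ = ℓ ^ (1/β) / F ^ (1/β) := by rw [ht₁, Real.div_rpow hℓ.le hFpos.le]
      have ht₂v : t₂ = u ^ (1/β) / F ^ (1/β) := by rw [ht₂, Real.div_rpow hu.le hFpos.le]
      have ht₁0 : 0 ≤ t₁ := by rw [ht₁v]; positivity
      have ht₂0 : 0 ≤ t₂ := by rw [ht₂v]; positivity
      have hcomb : θ * t₁ + (1 - θ) * t₂ = 1 := by
        rw [ht₁v, ht₂v, hθ]; field_simp; ring
      have hfP₁ : (t₁ * x₁) ^ a₁ * (t₁ * x₂) ^ a₂ = ℓ := by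
        rw [hfscale t₁ ht₁0, ht₁, hback (ℓ/F) (by positivity),
          div_mul_cancel₀ _ hFpos.ne']
      have hfP₂ : (t₂ * x₁) ^ a₁ * (t₂ * x₂) ^ a₂ = u := by
        rw [hfscale t₂ ht₂0, ht₂, hback (u/F) (by positivity),
          div_mul_cancel₀ _ hFpos.ne']
      have hchord : z ≤ θ * ℓ + (1 - θ) * u := by
        have hid := chord_id hβ0 hℓ hℓu hz₀ hγ hFpos.le (F := F)
        have heq : ((u ^ (1/β) - F ^ (1/β)) * ℓ + (F ^ (1/β) - ℓ ^ (1/β)) * u) /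
            (u ^ (1/β) - ℓ ^ (1/β)) = θ * ℓ + (1 - θ) * u := by
          rw [hθ]; field_simp; ring
        linarith [hid, heq, hzb]
      set cc := θ * ℓ + (1 - θ) * u - z with hcc
      have hcc0 : 0 ≤ cc := by rw [hcc]; linarith
      clear_value cc
      refine segment_subset_convexHull (x := ((t₁ * x₁, t₁ * x₂), ℓ - cc))
        (y := ((t₂ * x₁, t₂ * x₂), u - cc)) ?_ ?_ ⟨θ, 1 - θ, hθ0, hθ1, by ring, ?_⟩
      · refine ⟨⟨⟨mul_nonneg ht₁0 hx1, mul_nonneg ht₁0 hx2⟩, ?_, ?_, ?_⟩, ?_⟩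
        · rw [hfP₁]; exact ⟨le_refl ℓ, hℓu.le⟩
        · show p * (t₁ * x₁) ≤ t₁ * x₂
          linarith [mul_le_mul_of_nonneg_left hc1 ht₁0]
        · show t₁ * x₂ ≤ q * (t₁ * x₁)
          linarith [mul_le_mul_of_nonneg_left hc2 ht₁0]
        · show ℓ - cc ≤ (t₁ * x₁) ^ a₁ * (t₁ * x₂) ^ a₂
          rw [hfP₁]; linarith
      · refine ⟨⟨⟨mul_nonneg ht₂0 hx1, mul_nonneg ht₂0 hx2⟩, ?_, ?_, ?_⟩, ?_⟩
        · rw [hfP₂]; exact ⟨hℓu.le, le_refl u⟩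
        · show p * (t₂ * x₁) ≤ t₂ * x₂
          linarith [mul_le_mul_of_nonneg_left hc1 ht₂0]
        · show t₂ * x₂ ≤ q * (t₂ * x₁)
          linarith [mul_le_mul_of_nonneg_left hc2 ht₂0]
        · show u - cc ≤ (t₂ * x₁) ^ a₁ * (t₂ * x₂) ^ a₂
          rw [hfP₂]; linarith
      · simp only [Prod.smul_mk, Prod.mk_add_mk, smul_eq_mul, Prod.mk.injEq]
        refine ⟨⟨?_, ?_⟩, ?_⟩
        · linear_combination x₁ * hcomb
        · linear_combination x₂ * hcomb
        · rw [hcc]; ring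
    · -- ===== Case B : the point lies beyond the upper level set =====
      push_neg at hFu
      set s := x₂ / x₁ with hs
      have hspos : 0 < s := by rw [hs]; positivity
      have hsx : x₂ = s * x₁ := by rw [hs]; field_simp
      have hps : p ≤ s := by rw [hs, le_div_iff₀ hx1pos]; linarith
      have hsq : s ≤ q := by rw [hs, div_le_iff₀ hx1pos]; linarith
      have hsa : 0 < s ^ a₂ := Real.rpow_pos_of_pos hspos a₂
      have hds : 0 < d₂ - d₁ * s := by
        have := mul_pos (neg_pos.2 hd₁neg) hspos; linarith
      have hFs : x₁ ^ a₁ * x₂ ^ a₂ = x₁ ^ β * s ^ a₂ := by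
        rw [hsx, Real.mul_rpow hspos.le hx1pos.le, hβ, Real.rpow_add hx1pos]
        ring
      clear_value s
      set V := d₂ * x₁ - d₁ * x₂ with hV
      set T := V / u ^ (1/β) with hT
      clear_value V T
      set h : ℝ → ℝ := fun σ => d₂ * σ ^ (-(a₂/β)) - d₁ * σ ^ (a₁/β) with hh
      have hcont : ContinuousOn h (Icc p q) := by
        apply ContinuousOn.sub
        · exact continuousOn_const.mul (ContinuousOn.rpow_const continuousOn_id
            (fun x hx => Or.inl (ne_of_gt (lt_of_lt_of_le hp hx.1))))
        · exact continuousOn_const.mul (ContinuousOn.rpow_const continuousOn_id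
            (fun x hx => Or.inl (ne_of_gt (lt_of_lt_of_le hp hx.1))))
      have hx1big : u ^ (1/β) * s ^ (-(a₂/β)) < x₁ := by
        have h2 : u / s ^ a₂ < x₁ ^ β := by
          rw [div_lt_iff₀ hsa, ← hFs]; exact hFu
        calc u ^ (1/β) * s ^ (-(a₂/β)) = (u / s ^ a₂) ^ (1/β) := by
              rw [Real.div_rpow hu.le hsa.le, ← Real.rpow_mul hspos.le,
                show a₂ * (1/β) = a₂/β from by ring, Real.rpow_neg hspos.le]
              ring
          _ < (x₁ ^ β) ^ (1/β) := Real.rpow_lt_rpow (by positivity) h2 (by positivity)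
          _ = x₁ := hfwd x₁ hx1pos.le
      have hhs_lt : h s < T := by
        rw [hT, lt_div_iff₀ hU]
        simp only [hh]
        rw [hsplit s hspos, hV, hsx]
        have h7 := mul_lt_mul_of_pos_right hx1big hds
        linarith only [h7]
      have hhq : h p = h q := by
        simp only [hh]
        rw [hd₁, hd₂, hsplit p hp, hsplit q hq]
        ring
      have hhp_ge : T ≤ h p := by
        rw [hT, div_le_iff₀ hU]
        calc V ≤ (u / lam) ^ (1/β) := hcap
          _ = u ^ (1/β) * K := hcap_eq
          _ = h p * u ^ (1/β) := by simp only [hh]; rw [hK]; ring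
      obtain ⟨σ₁, hσ₁mem, hσ₁⟩ := intermediate_value_Icc' hps
        (hcont.mono (Icc_subset_Icc le_rfl hsq)) ⟨hhs_lt.le, hhp_ge⟩
      obtain ⟨σ₂, hσ₂mem, hσ₂⟩ := intermediate_value_Icc hsq
        (hcont.mono (Icc_subset_Icc hps le_rfl)) ⟨hhs_lt.le, by rw [← hhq]; exact hhp_ge⟩
      obtain ⟨hσ₁p, hσ₁s⟩ := hσ₁mem
      obtain ⟨hσ₂s, hσ₂q⟩ := hσ₂mem
      have hσ₁pos : 0 < σ₁ := lt_of_lt_of_le hp hσ₁p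
      have hσ₂pos : 0 < σ₂ := lt_of_lt_of_le hp (hps.trans hσ₂s)
      set A₁ := u ^ (1/β) * σ₁ ^ (-(a₂/β)) with hA₁
      set B₁ := u ^ (1/β) * σ₁ ^ (a₁/β) with hB₁
      set A₂ := u ^ (1/β) * σ₂ ^ (-(a₂/β)) with hA₂
      set B₂ := u ^ (1/β) * σ₂ ^ (a₁/β) with hB₂
      have hA₁pos : 0 < A₁ := by rw [hA₁]; positivity
      have hA₂pos : 0 < A₂ := by rw [hA₂]; positivity
      have hB₁v : B₁ = σ₁ * A₁ := by rw [hB₁, hA₁, hsplit σ₁ hσ₁pos]; ring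
      have hB₂v : B₂ = σ₂ * A₂ := by rw [hB₂, hA₂, hsplit σ₂ hσ₂pos]; ring
      have hB₁pos : 0 < B₁ := by rw [hB₁v]; positivity
      have hB₂pos : 0 < B₂ := by rw [hB₂v]; positivity
      have hfcurve : ∀ σ : ℝ, 0 < σ →
          (u ^ (1/β) * σ ^ (-(a₂/β))) ^ a₁ * (u ^ (1/β) * σ ^ (a₁/β)) ^ a₂ = u := by
        intro σ hσ
        have e1 : (u ^ (1/β)) ^ a₁ * (u ^ (1/β)) ^ a₂ = u := by
          rw [← Real.rpow_add hU, ← hβ, hback u hu.le]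
        have e2 : (σ ^ (-(a₂/β))) ^ a₁ * (σ ^ (a₁/β)) ^ a₂ = 1 := by
          rw [← Real.rpow_mul hσ.le, ← Real.rpow_mul hσ.le, ← Real.rpow_add hσ,
            show -(a₂/β) * a₁ + a₁/β * a₂ = 0 from by ring, Real.rpow_zero]
        calc (u ^ (1/β) * σ ^ (-(a₂/β))) ^ a₁ * (u ^ (1/β) * σ ^ (a₁/β)) ^ a₂
            = ((u ^ (1/β)) ^ a₁ * (u ^ (1/β)) ^ a₂) *
                ((σ ^ (-(a₂/β))) ^ a₁ * (σ ^ (a₁/β)) ^ a₂) := by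
              rw [Real.mul_rpow hU.le (Real.rpow_nonneg hσ.le _),
                Real.mul_rpow hU.le (Real.rpow_nonneg hσ.le _)]
              ring
          _ = u := by rw [e1, e2, mul_one]
      have hfP₁ : A₁ ^ a₁ * B₁ ^ a₂ = u := by rw [hA₁, hB₁]; exact hfcurve σ₁ hσ₁pos
      have hfP₂ : A₂ ^ a₁ * B₂ ^ a₂ = u := by rw [hA₂, hB₂]; exact hfcurve σ₂ hσ₂pos
      have hVP₁ : d₂ * A₁ - d₁ * B₁ = V := by
        have e : h σ₁ * u ^ (1/β) = d₂ * A₁ - d₁ * B₁ := by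
          simp only [hh]; rw [hA₁, hB₁]; ring
        rw [← e, hσ₁, hT]; field_simp
      have hVP₂ : d₂ * A₂ - d₁ * B₂ = V := by
        have e : h σ₂ * u ^ (1/β) = d₂ * A₂ - d₁ * B₂ := by
          simp only [hh]; rw [hA₂, hB₂]; ring
        rw [← e, hσ₂, hT]; field_simp
      clear_value A₁ B₁ A₂ B₂
      have hline₁ : x₁ * (d₂ - d₁ * s) = A₁ * (d₂ - d₁ * σ₁) := by
        have e := hVP₁
        rw [hB₁v, hV, hsx] at e
        linear_combination -e
      have hline₂ : x₁ * (d₂ - d₁ * s) = A₂ * (d₂ - d₁ * σ₂) := by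
        have e := hVP₂
        rw [hB₂v, hV, hsx] at e
        linear_combination -e
      have hB₁le : B₁ ≤ x₂ := by
        rw [hB₁v, hsx]
        have h9 : (s * x₁ - σ₁ * A₁) * (d₂ - d₁ * s) = A₁ * d₂ * (s - σ₁) := by
          linear_combination s * hline₁
        have h10 : 0 ≤ (s * x₁ - σ₁ * A₁) * (d₂ - d₁ * s) := by
          rw [h9]
          exact mul_nonneg (mul_nonneg hA₁pos.le hd₂pos.le) (sub_nonneg.2 hσ₁s)
        have h11 := (mul_nonneg_iff_of_pos_right hds).1 h10
        linarith only [h11]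
      have hB₂ge : x₂ ≤ B₂ := by
        rw [hB₂v, hsx]
        have h9 : (σ₂ * A₂ - s * x₁) * (d₂ - d₁ * s) = A₂ * d₂ * (σ₂ - s) := by
          linear_combination (-s) * hline₂
        have h10 : 0 ≤ (σ₂ * A₂ - s * x₁) * (d₂ - d₁ * s) := by
          rw [h9]
          exact mul_nonneg (mul_nonneg hA₂pos.le hd₂pos.le) (sub_nonneg.2 hσ₂s)
        have h11 := (mul_nonneg_iff_of_pos_right hds).1 h10
        linarith only [h11]
      rcases eq_or_lt_of_le (hB₁le.trans hB₂ge) with heqB | hltB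
      · exfalso
        have hx₂B : x₂ = B₁ := le_antisymm (by rw [heqB]; exact hB₂ge) hB₁le
        have hx₁A : x₁ = A₁ := by
          have e := hVP₁
          rw [hV] at e
          have e2 : d₂ * A₁ = d₂ * x₁ := by
            rw [hx₂B] at e
            linarith
          exact (mul_left_cancel₀ hd₂pos.ne' e2).symm
        rw [hx₁A, hx₂B, hfP₁] at hFu
        exact lt_irrefl u hFu
      · set μ := (B₂ - x₂) / (B₂ - B₁) with hμ
        have hd2pos' : (0:ℝ) < B₂ - B₁ := by linarith
        have hμ0 : 0 ≤ μ := by rw [hμ]; apply div_nonneg <;> linarith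
        have hμ1 : 0 ≤ 1 - μ := by rw [hμ, sub_nonneg, div_le_one hd2pos']; linarith
        have hcomb2 : μ * B₁ + (1 - μ) * B₂ = x₂ := by rw [hμ]; field_simp; ring
        have hcomb1 : μ * A₁ + (1 - μ) * A₂ = x₁ := by
          apply mul_left_cancel₀ hd₂pos.ne'
          calc d₂ * (μ * A₁ + (1 - μ) * A₂)
              = μ * (d₂ * A₁ - d₁ * B₁) + (1 - μ) * (d₂ * A₂ - d₁ * B₂)
                + d₁ * (μ * B₁ + (1 - μ) * B₂) := by ring
            _ = V + d₁ * x₂ := by rw [hVP₁, hVP₂, hcomb2]; ring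
            _ = d₂ * x₁ := by rw [hV]; ring
        refine segment_subset_convexHull (x := ((A₁, B₁), z)) (y := ((A₂, B₂), z))
          ?_ ?_ ⟨μ, 1 - μ, hμ0, hμ1, by ring, ?_⟩
        · refine ⟨⟨⟨hA₁pos.le, hB₁pos.le⟩, ?_, ?_, ?_⟩, ?_⟩
          · rw [hfP₁]; exact ⟨hℓu.le, le_refl u⟩
          · show p * A₁ ≤ B₁
            rw [hB₁v]
            exact mul_le_mul_of_nonneg_right hσ₁p hA₁pos.le
          · show B₁ ≤ q * A₁
            rw [hB₁v]
            exact mul_le_mul_of_nonneg_right (hσ₁s.trans hsq) hA₁pos.le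
          · show z ≤ A₁ ^ a₁ * B₁ ^ a₂
            rw [hfP₁]; exact hzu
        · refine ⟨⟨⟨hA₂pos.le, hB₂pos.le⟩, ?_, ?_, ?_⟩, ?_⟩
          · rw [hfP₂]; exact ⟨hℓu.le, le_refl u⟩
          · show p * A₂ ≤ B₂
            rw [hB₂v]
            exact mul_le_mul_of_nonneg_right (hps.trans hσ₂s) hA₂pos.le
          · show B₂ ≤ q * A₂
            rw [hB₂v]
            exact mul_le_mul_of_nonneg_right hσ₂q hA₂pos.le
          · show z ≤ A₂ ^ a₁ * B₂ ^ a₂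
            rw [hfP₂]; exact hzu
        · simp only [Prod.smul_mk, Prod.mk_add_mk, smul_eq_mul, Prod.mk.injEq]
          exact ⟨⟨hcomb1, hcomb2⟩, by ring⟩
end

section
/- For n = 2 and β = a₁ + a₂ ≤ 1, the upper envelope of f over X ∩ W₁₂, i.e. the convex hull of the hypograph {(x,z) ∈ (X ∩ W₁₂) × ℝ : z ≤ f(x)}, equals H = {(x,z) ∈ ℝ₊² × ℝ : x ∈ Y, z ≤ x₁^{a₁} x₂^{a₂}, and z ≤ u}. -/
open Real


/-- Two-point concavity of `x₁^a₁ * x₂^a₂` on positives when `a₁+a₂ ≤ 1`. -/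
lemma prod_rpow_concave2 {a₁ a₂ : ℝ} (ha₁ : 0 < a₁) (ha₂ : 0 < a₂) (hβ1 : a₁ + a₂ ≤ 1)
    {x₁ x₂ y₁ y₂ a b : ℝ} (hx₁ : 0 < x₁) (hx₂ : 0 < x₂) (hy₁ : 0 < y₁) (hy₂ : 0 < y₂)
    (ha : 0 < a) (hb : 0 < b) (hab : a + b = 1) :
    a * (x₁ ^ a₁ * x₂ ^ a₂) + b * (y₁ ^ a₁ * y₂ ^ a₂) ≤
      (a * x₁ + b * y₁) ^ a₁ * (a * x₂ + b * y₂) ^ a₂ := by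
  have hβ0 : (0:ℝ) < a₁ + a₂ := by positivity
  set w₁ := a₁ / (a₁ + a₂) with hw₁
  set w₂ := a₂ / (a₁ + a₂) with hw₂
  have hw₁0 : 0 < w₁ := by positivity
  have hw₂0 : 0 < w₂ := by positivity
  have hwsum : w₁ + w₂ = 1 := by
    rw [hw₁, hw₂, ← add_div, div_self hβ0.ne']
  set c₁ := a * x₁ + b * y₁ with hc₁
  set c₂ := a * x₂ + b * y₂ with hc₂
  have hc₁0 : 0 < c₁ := by positivity
  have hc₂0 : 0 < c₂ := by positivity
  set gx := x₁ ^ w₁ * x₂ ^ w₂ with hgx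
  set gy := y₁ ^ w₁ * y₂ ^ w₂ with hgy
  set gc := c₁ ^ w₁ * c₂ ^ w₂ with hgc
  have hgx0 : 0 < gx := by positivity
  have hgy0 : 0 < gy := by positivity
  have hgc0 : 0 < gc := by positivity
  -- step 1: a * gx + b * gy ≤ gc
  have step1 : a * gx + b * gy ≤ gc := by
    have hAx : (a * x₁ / c₁) ^ w₁ * (a * x₂ / c₂) ^ w₂ ≤ w₁ * (a * x₁ / c₁) + w₂ * (a * x₂ / c₂) :=
      Real.geom_mean_le_arith_mean2_weighted hw₁0.le hw₂0.le (by positivity) (by positivity) hwsum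
    have hAy : (b * y₁ / c₁) ^ w₁ * (b * y₂ / c₂) ^ w₂ ≤ w₁ * (b * y₁ / c₁) + w₂ * (b * y₂ / c₂) :=
      Real.geom_mean_le_arith_mean2_weighted hw₁0.le hw₂0.le (by positivity) (by positivity) hwsum
    have haw : a ^ w₁ * a ^ w₂ = a := by
      rw [← Real.rpow_add ha, hwsum, Real.rpow_one]
    have hbw : b ^ w₁ * b ^ w₂ = b := by
      rw [← Real.rpow_add hb, hwsum, Real.rpow_one]
    have hx' : (a * x₁ / c₁) ^ w₁ * (a * x₂ / c₂) ^ w₂ = a * gx / gc := by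
      calc (a * x₁ / c₁) ^ w₁ * (a * x₂ / c₂) ^ w₂
          = a ^ w₁ * x₁ ^ w₁ / c₁ ^ w₁ * (a ^ w₂ * x₂ ^ w₂ / c₂ ^ w₂) := by
            rw [Real.div_rpow (by positivity) hc₁0.le, Real.div_rpow (by positivity) hc₂0.le,
              Real.mul_rpow ha.le hx₁.le, Real.mul_rpow ha.le hx₂.le]
        _ = (a ^ w₁ * a ^ w₂) * (x₁ ^ w₁ * x₂ ^ w₂) / (c₁ ^ w₁ * c₂ ^ w₂) := by ring
        _ = a * gx / gc := by rw [haw, hgx, hgc]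
    have hy' : (b * y₁ / c₁) ^ w₁ * (b * y₂ / c₂) ^ w₂ = b * gy / gc := by
      calc (b * y₁ / c₁) ^ w₁ * (b * y₂ / c₂) ^ w₂
          = b ^ w₁ * y₁ ^ w₁ / c₁ ^ w₁ * (b ^ w₂ * y₂ ^ w₂ / c₂ ^ w₂) := by
            rw [Real.div_rpow (by positivity) hc₁0.le, Real.div_rpow (by positivity) hc₂0.le,
              Real.mul_rpow hb.le hy₁.le, Real.mul_rpow hb.le hy₂.le]
        _ = (b ^ w₁ * b ^ w₂) * (y₁ ^ w₁ * y₂ ^ w₂) / (c₁ ^ w₁ * c₂ ^ w₂) := by ring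
        _ = b * gy / gc := by rw [hbw, hgy, hgc]
    rw [hx'] at hAx; rw [hy'] at hAy
    have h1 : a * x₁ / c₁ + b * y₁ / c₁ = 1 := by
      have e : a * x₁ + b * y₁ = c₁ := hc₁.symm
      rw [← add_div, e, div_self hc₁0.ne']
    have h2 : a * x₂ / c₂ + b * y₂ / c₂ = 1 := by
      have e : a * x₂ + b * y₂ = c₂ := hc₂.symm
      rw [← add_div, e, div_self hc₂0.ne']
    have key : w₁ * (a * x₁ / c₁) + w₂ * (a * x₂ / c₂) +
        (w₁ * (b * y₁ / c₁) + w₂ * (b * y₂ / c₂)) = 1 := by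
      linear_combination w₁ * h1 + w₂ * h2 + hwsum
    have hsum : a * gx / gc + b * gy / gc ≤ 1 := by linarith
    have := mul_le_mul_of_nonneg_right hsum hgc0.le
    calc a * gx + b * gy = (a * gx / gc + b * gy / gc) * gc := by field_simp
      _ ≤ 1 * gc := this
      _ = gc := one_mul _
  -- step 2: rewrite f = g^β
  have hfx : x₁ ^ a₁ * x₂ ^ a₂ = gx ^ (a₁ + a₂) := by
    rw [hgx, Real.mul_rpow (by positivity) (by positivity), ← Real.rpow_mul hx₁.le,
      ← Real.rpow_mul hx₂.le, hw₁, hw₂, div_mul_cancel₀ _ hβ0.ne', div_mul_cancel₀ _ hβ0.ne']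
  have hfy : y₁ ^ a₁ * y₂ ^ a₂ = gy ^ (a₁ + a₂) := by
    rw [hgy, Real.mul_rpow (by positivity) (by positivity), ← Real.rpow_mul hy₁.le,
      ← Real.rpow_mul hy₂.le, hw₁, hw₂, div_mul_cancel₀ _ hβ0.ne', div_mul_cancel₀ _ hβ0.ne']
  have hfc : c₁ ^ a₁ * c₂ ^ a₂ = gc ^ (a₁ + a₂) := by
    rw [hgc, Real.mul_rpow (by positivity) (by positivity), ← Real.rpow_mul hc₁0.le,
      ← Real.rpow_mul hc₂0.le, hw₁, hw₂, div_mul_cancel₀ _ hβ0.ne', div_mul_cancel₀ _ hβ0.ne']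
  rw [hfx, hfy, hfc]
  have hconc : a * gx ^ (a₁ + a₂) + b * gy ^ (a₁ + a₂) ≤ (a * gx + b * gy) ^ (a₁ + a₂) := by
    have := (Real.concaveOn_rpow hβ0.le hβ1).2 (Set.mem_Ici.2 hgx0.le) (Set.mem_Ici.2 hgy0.le)
      ha.le hb.le hab
    simpa [smul_eq_mul] using this
  refine hconc.trans ?_
  exact Real.rpow_le_rpow (by positivity) step1 hβ0.le


lemma key_facts {a₁ a₂ p q β d₁ d₂ lam : ℝ} (ha₁ : 0 < a₁) (ha₂ : 0 < a₂)
    (hβ : β = a₁ + a₂) (hp : 0 < p) (hpq : p < q)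
    (hd₁ : d₁ = q ^ (-(a₂ / β)) - p ^ (-(a₂ / β)))
    (hd₂ : d₂ = q ^ (a₁ / β) - p ^ (a₁ / β))
    (hlam : lam = p ^ a₂ / (d₂ - d₁ * p) ^ β) :
    d₁ < 0 ∧ 0 < d₂ ∧ 0 < lam ∧
      lam * (d₂ - d₁ * p) ^ β = p ^ a₂ ∧ lam * (d₂ - d₁ * q) ^ β = q ^ a₂ ∧
      (∀ t, p ≤ t → t ≤ q → lam * (d₂ - d₁ * t) ^ β ≤ t ^ a₂) := by
  have hβ0 : 0 < β := by rw [hβ]; positivity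
  have hq : 0 < q := hp.trans hpq
  have hw₂0 : 0 < a₂ / β := by positivity
  have hw₂1 : a₂ / β < 1 := by
    rw [div_lt_one hβ0, hβ]; linarith
  have hrw : ∀ x : ℝ, 0 < x → x ^ (-(a₂ / β)) * x = x ^ (a₁ / β) := by
    intro x hx
    rw [← Real.rpow_add_one hx.ne' (-(a₂ / β))]
    congr 1
    rw [hβ]
    field_simp
    ring
  have h1 := hrw p hp
  have h2 := hrw q hq
  have Ep : d₂ - d₁ * p = q ^ (-(a₂ / β)) * (q - p) := by
    rw [hd₁, hd₂]; linear_combination h1 - h2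
  have Eq' : d₂ - d₁ * q = p ^ (-(a₂ / β)) * (q - p) := by
    rw [hd₁, hd₂]; linear_combination h1 - h2
  have hqpow : 0 < q ^ (-(a₂ / β)) := Real.rpow_pos_of_pos hq _
  have hppow : 0 < p ^ (-(a₂ / β)) := Real.rpow_pos_of_pos hp _
  have hqp0 : 0 < q - p := by linarith
  have hEp0 : 0 < d₂ - d₁ * p := by rw [Ep]; positivity
  have hEq0 : 0 < d₂ - d₁ * q := by rw [Eq']; positivity
  have hd₁neg : d₁ < 0 := by
    rw [hd₁]
    have hlt : p ^ (a₂ / β) < q ^ (a₂ / β) := Real.rpow_lt_rpow hp.le hpq hw₂0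
    have hppos : 0 < p ^ (a₂ / β) := Real.rpow_pos_of_pos hp _
    rw [Real.rpow_neg hp.le, Real.rpow_neg hq.le]
    have := one_div_lt_one_div_of_lt hppos hlt
    simp only [one_div] at this
    linarith
  have hd₂pos : 0 < d₂ := by
    have hlt : p ^ (a₁ / β) < q ^ (a₁ / β) := Real.rpow_lt_rpow hp.le hpq (by positivity)
    rw [hd₂]; linarith
  have hlam0 : 0 < lam := by
    rw [hlam]; positivity
  have eqp : lam * (d₂ - d₁ * p) ^ β = p ^ a₂ := by
    rw [hlam]
    have hne : (d₂ - d₁ * p) ^ β ≠ 0 := (Real.rpow_pos_of_pos hEp0 _).ne'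
    field_simp
  set C := (q - p) * (p * q) ^ (-(a₂ / β)) with hC
  have hC0 : 0 < C := by
    have : 0 < (p * q) ^ (-(a₂ / β)) := Real.rpow_pos_of_pos (by positivity) _
    positivity
  have hmul : (p * q) ^ (-(a₂ / β)) = p ^ (-(a₂ / β)) * q ^ (-(a₂ / β)) :=
    Real.mul_rpow hp.le hq.le
  have hCp : C * p ^ (a₂ / β) = d₂ - d₁ * p := by
    rw [Ep, hC, hmul]
    have hpp : p ^ (-(a₂ / β)) * p ^ (a₂ / β) = 1 := by
      rw [← Real.rpow_add hp]; simp
    linear_combination (q - p) * q ^ (-(a₂ / β)) * hpp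
  have hCq : C * q ^ (a₂ / β) = d₂ - d₁ * q := by
    rw [Eq', hC, hmul]
    have hqq : q ^ (-(a₂ / β)) * q ^ (a₂ / β) = 1 := by
      rw [← Real.rpow_add hq]; simp
    linear_combination (q - p) * p ^ (-(a₂ / β)) * hqq
  have hCpow : (C * p ^ (a₂ / β)) ^ β = C ^ β * p ^ a₂ := by
    rw [Real.mul_rpow hC0.le (Real.rpow_pos_of_pos hp _).le, ← Real.rpow_mul hp.le]
    rw [div_mul_cancel₀ _ hβ0.ne']
  have hpa : (0:ℝ) < p ^ a₂ := Real.rpow_pos_of_pos hp _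
  have hCb : (0:ℝ) < C ^ β := Real.rpow_pos_of_pos hC0 _
  have hlamC : lam * C ^ β = 1 := by
    rw [hlam, ← hCp, hCpow]
    field_simp
  have eqq : lam * (d₂ - d₁ * q) ^ β = q ^ a₂ := by
    have hCqpow : (C * q ^ (a₂ / β)) ^ β = C ^ β * q ^ a₂ := by
      rw [Real.mul_rpow hC0.le (Real.rpow_pos_of_pos hq _).le, ← Real.rpow_mul hq.le]
      congr 2
      field_simp
    rw [← hCq, hCqpow, ← mul_assoc, hlamC, one_mul]
  refine ⟨hd₁neg, hd₂pos, hlam0, eqp, eqq, ?_⟩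
  intro t hpt htq
  have ht0 : 0 < t := hp.trans_le hpt
  set θ := (q - t) / (q - p) with hθ
  have hθ0 : 0 ≤ θ := div_nonneg (by linarith) hqp0.le
  have hθ1 : θ ≤ 1 := by rw [hθ, div_le_one hqp0]; linarith
  have hsum : θ + (1 - θ) = 1 := by ring
  have ht : θ * p + (1 - θ) * q = t := by rw [hθ]; field_simp; ring
  have hconc : θ * p ^ (a₂ / β) + (1 - θ) * q ^ (a₂ / β) ≤ t ^ (a₂ / β) := by
    have := (Real.concaveOn_rpow hw₂0.le hw₂1.le).2 (Set.mem_Ici.2 hp.le)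
      (Set.mem_Ici.2 hq.le) hθ0 (by linarith) hsum
    simpa [smul_eq_mul, ht] using this
  have hchord : d₂ - d₁ * t ≤ C * t ^ (a₂ / β) := by
    have hlin : d₂ - d₁ * t = θ * (C * p ^ (a₂ / β)) + (1 - θ) * (C * q ^ (a₂ / β)) := by
      rw [hCp, hCq, ← ht]; ring
    have hmm := mul_le_mul_of_nonneg_left hconc hC0.le
    calc d₂ - d₁ * t = C * (θ * p ^ (a₂ / β) + (1 - θ) * q ^ (a₂ / β)) := by rw [hlin]; ring
      _ ≤ C * t ^ (a₂ / β) := hmm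
  have hlin0 : 0 < d₂ - d₁ * t := by
    nlinarith [mul_nonneg (neg_nonneg.2 hd₁neg.le) (sub_nonneg.2 hpt), hEp0]
  have hstep : (d₂ - d₁ * t) ^ β ≤ (C * t ^ (a₂ / β)) ^ β :=
    Real.rpow_le_rpow hlin0.le hchord hβ0.le
  have hCt : (C * t ^ (a₂ / β)) ^ β = C ^ β * t ^ a₂ := by
    rw [Real.mul_rpow hC0.le (Real.rpow_pos_of_pos ht0 _).le, ← Real.rpow_mul ht0.le]
    rw [div_mul_cancel₀ _ hβ0.ne']
  calc lam * (d₂ - d₁ * t) ^ β ≤ lam * (C ^ β * t ^ a₂) := by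
        rw [← hCt]; exact mul_le_mul_of_nonneg_left hstep hlam0.le
    _ = (lam * C ^ β) * t ^ a₂ := by ring
    _ = t ^ a₂ := by rw [hlamC, one_mul]

set_option maxHeartbeats 2000000 in
/-- For `n = 2` and `β = a₁ + a₂ ≤ 1`, the upper envelope of `f` over
`X ∩ W₁₂` equals `H = {(x,z) : x ∈ Y, z ≤ x₁^{a₁} x₂^{a₂}, z ≤ u}`. -/
theorem upper_envelope_n2_of_beta_le_one (a₁ a₂ ℓ u p q β d₁ d₂ lam : ℝ)
    (ha₁ : 0 < a₁) (ha₂ : 0 < a₂) (hβ : β = a₁ + a₂) (hβ1 : β ≤ 1)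
    (hℓ : 0 < ℓ) (hℓu : ℓ < u) (hp : 0 < p) (hpq : p < q)
    (hd₁ : d₁ = q ^ (-(a₂ / β)) - p ^ (-(a₂ / β)))
    (hd₂ : d₂ = q ^ (a₁ / β) - p ^ (a₁ / β))
    (hlam : lam = p ^ a₂ / (d₂ - d₁ * p) ^ β) :
    convexHull ℝ
      {xz : (ℝ × ℝ) × ℝ |
        ((0 ≤ xz.1.1 ∧ 0 ≤ xz.1.2) ∧
          (ℓ ≤ xz.1.1 ^ a₁ * xz.1.2 ^ a₂ ∧ xz.1.1 ^ a₁ * xz.1.2 ^ a₂ ≤ u) ∧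
          (p * xz.1.1 ≤ xz.1.2 ∧ xz.1.2 ≤ q * xz.1.1)) ∧
        xz.2 ≤ xz.1.1 ^ a₁ * xz.1.2 ^ a₂} =
    {xz : (ℝ × ℝ) × ℝ |
        ((0 ≤ xz.1.1 ∧ 0 ≤ xz.1.2) ∧
          (p * xz.1.1 ≤ xz.1.2 ∧ xz.1.2 ≤ q * xz.1.1) ∧
          ℓ ≤ xz.1.1 ^ a₁ * xz.1.2 ^ a₂ ∧
          d₂ * xz.1.1 - d₁ * xz.1.2 ≤ (u / lam) ^ (1 / β)) ∧
        xz.2 ≤ xz.1.1 ^ a₁ * xz.1.2 ^ a₂ ∧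
        xz.2 ≤ u} := by
  obtain ⟨hd₁neg, hd₂pos, hlam0, eqp, eqq, hkey⟩ :=
    key_facts ha₁ ha₂ hβ hp hpq hd₁ hd₂ hlam
  have hβ0 : 0 < β := by rw [hβ]; positivity
  have hq : 0 < q := hp.trans hpq
  have hu0 : 0 < u := hℓ.trans hℓu
  have hβ1' : a₁ + a₂ ≤ 1 := hβ ▸ hβ1
  -- positivity from the lower bound ℓ ≤ f
  have pos : ∀ y₁ y₂ : ℝ, 0 ≤ y₁ → 0 ≤ y₂ → ℓ ≤ y₁ ^ a₁ * y₂ ^ a₂ → 0 < y₁ ∧ 0 < y₂ := by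
    intro y₁ y₂ h1 h2 hf
    constructor
    · rcases h1.eq_or_lt with h | h
      · exfalso; rw [← h, Real.zero_rpow ha₁.ne', zero_mul] at hf; linarith
      · exact h
    · rcases h2.eq_or_lt with h | h
      · exfalso; rw [← h, Real.zero_rpow ha₂.ne', mul_zero] at hf; linarith
      · exact h
  have hdp0 : 0 < d₂ - d₁ * p := by nlinarith [mul_pos (neg_pos.2 hd₁neg) hp]
  have hdq0 : 0 < d₂ - d₁ * q := by nlinarith [mul_pos (neg_pos.2 hd₁neg) hq]
  apply Set.Subset.antisymm
  · apply convexHull_min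
    · -- S ⊆ H
      rintro ⟨⟨x₁, x₂⟩, z⟩ ⟨⟨⟨hx₁, hx₂⟩, ⟨hfl, hfu⟩, hc₁, hc₂⟩, hz⟩
      obtain ⟨hx₁0, hx₂0⟩ := pos x₁ x₂ hx₁ hx₂ hfl
      have hpt : p ≤ x₂ / x₁ := (le_div_iff₀ hx₁0).2 (by linarith)
      have htq : x₂ / x₁ ≤ q := (div_le_iff₀ hx₁0).2 (by linarith)
      have hk := hkey _ hpt htq
      have ht0 : 0 < x₂ / x₁ := by positivity
      have hnn : 0 ≤ d₂ - d₁ * (x₂ / x₁) := by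
        nlinarith [mul_pos (neg_pos.2 hd₁neg) ht0]
      have hGnn : 0 ≤ d₂ * x₁ - d₁ * x₂ := by
        nlinarith [mul_nonneg (mul_pos (neg_pos.2 hd₁neg) ht0).le hx₁0.le,
          mul_nonneg hd₂pos.le hx₁0.le, mul_nonneg (neg_pos.2 hd₁neg).le hx₂0.le]
      have main : lam * (d₂ * x₁ - d₁ * x₂) ^ β ≤ x₁ ^ a₁ * x₂ ^ a₂ := by
        have e1 : d₂ * x₁ - d₁ * x₂ = x₁ * (d₂ - d₁ * (x₂ / x₁)) := by
          field_simp
        rw [e1, Real.mul_rpow hx₁0.le hnn]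
        calc lam * (x₁ ^ β * (d₂ - d₁ * (x₂ / x₁)) ^ β)
            = x₁ ^ β * (lam * (d₂ - d₁ * (x₂ / x₁)) ^ β) := by ring
          _ ≤ x₁ ^ β * (x₂ / x₁) ^ a₂ := by
              exact mul_le_mul_of_nonneg_left hk (Real.rpow_nonneg hx₁0.le _)
          _ = x₁ ^ a₁ * x₂ ^ a₂ := by
              rw [Real.div_rpow hx₂0.le hx₁0.le, hβ, Real.rpow_add hx₁0]
              field_simp
      have hGu : lam * (d₂ * x₁ - d₁ * x₂) ^ β ≤ u := le_trans main hfu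
      have hGpow : (d₂ * x₁ - d₁ * x₂) ^ β ≤ u / lam := (le_div_iff₀' hlam0).2 hGu
      have hGle : d₂ * x₁ - d₁ * x₂ ≤ (u / lam) ^ (1 / β) := by
        have h2 : ((d₂ * x₁ - d₁ * x₂) ^ β) ^ (1 / β) ≤ (u / lam) ^ (1 / β) :=
          Real.rpow_le_rpow (Real.rpow_nonneg hGnn _) hGpow (by positivity)
        rwa [← Real.rpow_mul hGnn, mul_one_div_cancel hβ0.ne', Real.rpow_one] at h2
      exact ⟨⟨⟨hx₁, hx₂⟩, ⟨hc₁, hc₂⟩, hfl, hGle⟩, hz, hz.trans hfu⟩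
    · -- H is convex
      intro P hP Q hQ a b ha hb hab
      obtain rfl | ha0 := ha.eq_or_lt
      · have hb1 : b = 1 := by linarith
        subst hb1; simpa using hQ
      obtain rfl | hb0 := hb.eq_or_lt
      · have ha1 : a = 1 := by linarith
        subst ha1; simpa using hP
      obtain ⟨⟨x₁, x₂⟩, zx⟩ := P
      obtain ⟨⟨y₁, y₂⟩, zy⟩ := Q
      obtain ⟨⟨⟨hx₁, hx₂⟩, ⟨hxc₁, hxc₂⟩, hxfl, hxG⟩, hxzf, hxzu⟩ := hP
      obtain ⟨⟨⟨hy₁, hy₂⟩, ⟨hyc₁, hyc₂⟩, hyfl, hyG⟩, hyzf, hyzu⟩ := hQ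
      obtain ⟨hx₁0, hx₂0⟩ := pos x₁ x₂ hx₁ hx₂ hxfl
      obtain ⟨hy₁0, hy₂0⟩ := pos y₁ y₂ hy₁ hy₂ hyfl
      simp only [Prod.smul_mk, Prod.mk_add_mk, smul_eq_mul, Set.mem_setOf_eq]
      have hconc := prod_rpow_concave2 ha₁ ha₂ hβ1' hx₁0 hx₂0 hy₁0 hy₂0 ha0 hb0 hab
      have hℓeq : a * ℓ + b * ℓ = ℓ := by linear_combination ℓ * hab
      have hueq : a * u + b * u = u := by linear_combination u * hab
      have hMeq : a * (u / lam) ^ (1 / β) + b * (u / lam) ^ (1 / β) = (u / lam) ^ (1 / β) := by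
        linear_combination (u / lam) ^ (1 / β) * hab
      refine ⟨⟨⟨by positivity, by positivity⟩, ⟨?_, ?_⟩, ?_, ?_⟩, ?_, ?_⟩
      · nlinarith [mul_le_mul_of_nonneg_left hxc₁ ha0.le, mul_le_mul_of_nonneg_left hyc₁ hb0.le]
      · nlinarith [mul_le_mul_of_nonneg_left hxc₂ ha0.le, mul_le_mul_of_nonneg_left hyc₂ hb0.le]
      · have h1 := mul_le_mul_of_nonneg_left hxfl ha0.le
        have h2 := mul_le_mul_of_nonneg_left hyfl hb0.le
        linarith
      · have h1 := mul_le_mul_of_nonneg_left hxG ha0.le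
        have h2 := mul_le_mul_of_nonneg_left hyG hb0.le
        nlinarith
      · have h1 := mul_le_mul_of_nonneg_left hxzf ha0.le
        have h2 := mul_le_mul_of_nonneg_left hyzf hb0.le
        linarith
      · have h1 := mul_le_mul_of_nonneg_left hxzu ha0.le
        have h2 := mul_le_mul_of_nonneg_left hyzu hb0.le
        linarith
  · -- H ⊆ convexHull S
    rintro ⟨⟨x₁, x₂⟩, z⟩ ⟨⟨⟨hx₁, hx₂⟩, ⟨hc₁, hc₂⟩, hfl, hGle⟩, hzf, hzu⟩
    obtain ⟨hx₁0, hx₂0⟩ := pos x₁ x₂ hx₁ hx₂ hfl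
    by_cases hfu : x₁ ^ a₁ * x₂ ^ a₂ ≤ u
    · exact subset_convexHull ℝ _ ⟨⟨⟨hx₁, hx₂⟩, ⟨hfl, hfu⟩, hc₁, hc₂⟩, hzf⟩
    push_neg at hfu
    set s₀ := (p * x₁ - x₂) / (d₂ - d₁ * p) with hs₀
    set s₁ := (q * x₁ - x₂) / (d₂ - d₁ * q) with hs₁def
    have hs₀le : s₀ ≤ 0 := div_nonpos_of_nonpos_of_nonneg (by linarith) hdp0.le
    have hs₁ge : 0 ≤ s₁ := div_nonneg (by linarith) hdq0.le
    have ray1 : ∀ s : ℝ, (x₂ + s * d₂) - p * (x₁ + s * d₁) = (s - s₀) * (d₂ - d₁ * p) := by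
      intro s; rw [hs₀, sub_mul, div_mul_cancel₀ _ hdp0.ne']; ring
    have ray2 : ∀ s : ℝ, q * (x₁ + s * d₁) - (x₂ + s * d₂) = (s₁ - s) * (d₂ - d₁ * q) := by
      intro s; rw [hs₁def, sub_mul, div_mul_cancel₀ _ hdq0.ne']; ring
    have cone : ∀ s, s₀ ≤ s → s ≤ s₁ →
        p * (x₁ + s * d₁) ≤ x₂ + s * d₂ ∧ x₂ + s * d₂ ≤ q * (x₁ + s * d₁) := by
      intro s h0 h1
      constructor
      · nlinarith [ray1 s, mul_nonneg (sub_nonneg.2 h0) hdp0.le]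
      · nlinarith [ray2 s, mul_nonneg (sub_nonneg.2 h1) hdq0.le]
    have X1nn : ∀ s, s₀ ≤ s → s ≤ s₁ → 0 ≤ x₁ + s * d₁ := by
      intro s h0 h1
      obtain ⟨c1, c2⟩ := cone s h0 h1
      nlinarith
    have X2nn : ∀ s, s₀ ≤ s → s ≤ s₁ → 0 ≤ x₂ + s * d₂ := by
      intro s h0 h1
      obtain ⟨c1, c2⟩ := cone s h0 h1
      nlinarith [X1nn s h0 h1, mul_nonneg hp.le (X1nn s h0 h1)]
    have hGnn : 0 ≤ d₂ * x₁ - d₁ * x₂ := by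
      nlinarith [mul_pos hd₂pos hx₁0, mul_pos (neg_pos.2 hd₁neg) hx₂0]
    -- the value bound along the line
    have bound : lam * (d₂ * x₁ - d₁ * x₂) ^ β ≤ u := by
      have h1 : (d₂ * x₁ - d₁ * x₂) ^ β ≤ ((u / lam) ^ (1 / β)) ^ β :=
        Real.rpow_le_rpow hGnn hGle hβ0.le
      have h2 : ((u / lam) ^ (1 / β)) ^ β = u / lam := by
        rw [← Real.rpow_mul (div_nonneg hu0.le hlam0.le), one_div,
          inv_mul_cancel₀ hβ0.ne', Real.rpow_one]
      rw [h2] at h1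
      calc lam * (d₂ * x₁ - d₁ * x₂) ^ β ≤ lam * (u / lam) :=
            mul_le_mul_of_nonneg_left h1 hlam0.le
        _ = u := by field_simp
    -- endpoint values
    have hX2eq₀ : x₂ + s₀ * d₂ = p * (x₁ + s₀ * d₁) := by
      have := ray1 s₀; simp at this; linarith
    have hX2eq₁ : x₂ + s₁ * d₂ = q * (x₁ + s₁ * d₁) := by
      have := ray2 s₁; simp at this; linarith
    have hX1s₀ : x₁ + s₀ * d₁ = (d₂ * x₁ - d₁ * x₂) / (d₂ - d₁ * p) := by
      rw [hs₀, div_mul_eq_mul_div, add_div' _ _ _ hdp0.ne']; congr 1; ring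
    have hX1s₁ : x₁ + s₁ * d₁ = (d₂ * x₁ - d₁ * x₂) / (d₂ - d₁ * q) := by
      rw [hs₁def, div_mul_eq_mul_div, add_div' _ _ _ hdq0.ne']; congr 1; ring
    have hGpos : 0 < d₂ * x₁ - d₁ * x₂ := by
      nlinarith [mul_pos hd₂pos hx₁0, mul_pos (neg_pos.2 hd₁neg) hx₂0]
    have hX1s₀pos : 0 < x₁ + s₀ * d₁ := by rw [hX1s₀]; positivity
    have hX1s₁pos : 0 < x₁ + s₁ * d₁ := by rw [hX1s₁]; positivity
    have hFs₀ : (x₁ + s₀ * d₁) ^ a₁ * (x₂ + s₀ * d₂) ^ a₂ ≤ u := by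
      calc (x₁ + s₀ * d₁) ^ a₁ * (x₂ + s₀ * d₂) ^ a₂
          = (x₁ + s₀ * d₁) ^ a₁ * (p * (x₁ + s₀ * d₁)) ^ a₂ := by rw [hX2eq₀]
        _ = p ^ a₂ * (x₁ + s₀ * d₁) ^ β := by
            rw [Real.mul_rpow hp.le hX1s₀pos.le, hβ, Real.rpow_add hX1s₀pos]; ring
        _ = lam * (d₂ - d₁ * p) ^ β * (x₁ + s₀ * d₁) ^ β := by rw [eqp]
        _ = lam * ((d₂ - d₁ * p) * (x₁ + s₀ * d₁)) ^ β := by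
            rw [Real.mul_rpow hdp0.le hX1s₀pos.le]; ring
        _ = lam * (d₂ * x₁ - d₁ * x₂) ^ β := by
            have e : (d₂ - d₁ * p) * (x₁ + s₀ * d₁) = d₂ * x₁ - d₁ * x₂ := by
              rw [hX1s₀]; field_simp
            rw [e]
        _ ≤ u := bound
    have hFs₁ : (x₁ + s₁ * d₁) ^ a₁ * (x₂ + s₁ * d₂) ^ a₂ ≤ u := by
      calc (x₁ + s₁ * d₁) ^ a₁ * (x₂ + s₁ * d₂) ^ a₂
          = (x₁ + s₁ * d₁) ^ a₁ * (q * (x₁ + s₁ * d₁)) ^ a₂ := by rw [hX2eq₁]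
        _ = q ^ a₂ * (x₁ + s₁ * d₁) ^ β := by
            rw [Real.mul_rpow hq.le hX1s₁pos.le, hβ, Real.rpow_add hX1s₁pos]; ring
        _ = lam * (d₂ - d₁ * q) ^ β * (x₁ + s₁ * d₁) ^ β := by rw [eqq]
        _ = lam * ((d₂ - d₁ * q) * (x₁ + s₁ * d₁)) ^ β := by
            rw [Real.mul_rpow hdq0.le hX1s₁pos.le]; ring
        _ = lam * (d₂ * x₁ - d₁ * x₂) ^ β := by
            have e : (d₂ - d₁ * q) * (x₁ + s₁ * d₁) = d₂ * x₁ - d₁ * x₂ := by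
              rw [hX1s₁]; field_simp
            rw [e]
        _ ≤ u := bound
    -- continuity and IVT
    set F := fun s : ℝ => (x₁ + s * d₁) ^ a₁ * (x₂ + s * d₂) ^ a₂ with hF
    have hcont : Continuous F := by
      apply Continuous.mul
      · exact (continuous_const.add (continuous_id.mul continuous_const)).rpow_const
          (fun s => Or.inr ha₁.le)
      · exact (continuous_const.add (continuous_id.mul continuous_const)).rpow_const
          (fun s => Or.inr ha₂.le)
    have hF0 : F 0 = x₁ ^ a₁ * x₂ ^ a₂ := by simp [hF]
    obtain ⟨sm, hsmIcc, hsmF⟩ := intermediate_value_Icc hs₀le hcont.continuousOn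
      (Set.mem_Icc.2 ⟨hFs₀, by rw [hF0]; exact hfu.le⟩)
    obtain ⟨sp, hspIcc, hspF⟩ := intermediate_value_Icc' hs₁ge hcont.continuousOn
      (Set.mem_Icc.2 ⟨hFs₁, by rw [hF0]; exact hfu.le⟩)
    have hsm0 : sm < 0 := by
      rcases hsmIcc.2.eq_or_lt with h | h
      · exfalso; rw [h, hF0] at hsmF; linarith
      · exact h
    have hsp0 : 0 < sp := by
      rcases hspIcc.1.eq_or_lt with h | h
      · exfalso; rw [← h, hF0] at hspF; linarith
      · exact h
    have hsmIcc' : s₀ ≤ sm ∧ sm ≤ s₁ := ⟨hsmIcc.1, le_trans hsmIcc.2 hs₁ge⟩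
    have hspIcc' : s₀ ≤ sp ∧ sp ≤ s₁ := ⟨le_trans hs₀le hspIcc.1, hspIcc.2⟩
    set θ := sp / (sp - sm) with hθ
    have hspm : 0 < sp - sm := by linarith
    have hθ0 : 0 < θ := by positivity
    have hθ1 : θ < 1 := by rw [hθ, div_lt_one hspm]; linarith
    -- endpoints are in S
    have memm : (((x₁ + sm * d₁, x₂ + sm * d₂), z) : (ℝ × ℝ) × ℝ) ∈
        {xz : (ℝ × ℝ) × ℝ |
          ((0 ≤ xz.1.1 ∧ 0 ≤ xz.1.2) ∧
            (ℓ ≤ xz.1.1 ^ a₁ * xz.1.2 ^ a₂ ∧ xz.1.1 ^ a₁ * xz.1.2 ^ a₂ ≤ u) ∧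
            (p * xz.1.1 ≤ xz.1.2 ∧ xz.1.2 ≤ q * xz.1.1)) ∧
          xz.2 ≤ xz.1.1 ^ a₁ * xz.1.2 ^ a₂} := by
      have hFm : (x₁ + sm * d₁) ^ a₁ * (x₂ + sm * d₂) ^ a₂ = u := hsmF
      exact ⟨⟨⟨X1nn sm hsmIcc'.1 hsmIcc'.2, X2nn sm hsmIcc'.1 hsmIcc'.2⟩,
        ⟨by rw [hFm]; linarith, by rw [hFm]⟩,
        cone sm hsmIcc'.1 hsmIcc'.2⟩, by rw [hFm]; exact hzu⟩
    have memp : (((x₁ + sp * d₁, x₂ + sp * d₂), z) : (ℝ × ℝ) × ℝ) ∈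
        {xz : (ℝ × ℝ) × ℝ |
          ((0 ≤ xz.1.1 ∧ 0 ≤ xz.1.2) ∧
            (ℓ ≤ xz.1.1 ^ a₁ * xz.1.2 ^ a₂ ∧ xz.1.1 ^ a₁ * xz.1.2 ^ a₂ ≤ u) ∧
            (p * xz.1.1 ≤ xz.1.2 ∧ xz.1.2 ≤ q * xz.1.1)) ∧
          xz.2 ≤ xz.1.1 ^ a₁ * xz.1.2 ^ a₂} := by
      have hFp : (x₁ + sp * d₁) ^ a₁ * (x₂ + sp * d₂) ^ a₂ = u := hspF
      exact ⟨⟨⟨X1nn sp hspIcc'.1 hspIcc'.2, X2nn sp hspIcc'.1 hspIcc'.2⟩,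
        ⟨by rw [hFp]; linarith, by rw [hFp]⟩,
        cone sp hspIcc'.1 hspIcc'.2⟩, by rw [hFp]; exact hzu⟩
    have hcomb : θ • (((x₁ + sm * d₁, x₂ + sm * d₂), z) : (ℝ × ℝ) × ℝ) +
        (1 - θ) • (((x₁ + sp * d₁, x₂ + sp * d₂), z) : (ℝ × ℝ) × ℝ) = ((x₁, x₂), z) := by
      simp only [Prod.smul_mk, Prod.mk_add_mk, smul_eq_mul, Prod.mk.injEq]
      refine ⟨⟨?_, ?_⟩, ?_⟩
      · rw [hθ]; field_simp; ring
      · rw [hθ]; field_simp; ring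
      · ring
    have hseg : (((x₁, x₂), z) : (ℝ × ℝ) × ℝ) ∈
        segment ℝ (((x₁ + sm * d₁, x₂ + sm * d₂), z) : (ℝ × ℝ) × ℝ)
          (((x₁ + sp * d₁, x₂ + sp * d₂), z) : (ℝ × ℝ) × ℝ) :=
      ⟨θ, 1 - θ, hθ0.le, by linarith, by ring, hcomb⟩
    exact segment_subset_convexHull memm memp hseg
end

section
/- For n = 2 and β = a₁ + a₂ ≥ 1, the lower envelope of f over X ∩ W₁₂, i.e. the convex hull of the epigraph {(x,z) ∈ (X ∩ W₁₂) × ℝ : z ≥ f(x)}, equals H = {(x,z) ∈ ℝ₊² × ℝ : x ∈ Y, z ≥ λ (d₂ x₁ − d₁ x₂)^β, and z ≥ ℓ}. -/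
open Real Set

/-- Secant line of `t ↦ t^c` lies below the graph on `[p,q]`. -/
lemma aux_secant {c p q d₁ d₂ μ : ℝ} (hc0 : 0 < c) (hc1 : c < 1) (hp : 0 < p) (hpq : p < q)
    (hE1 : μ * (d₂ - d₁ * p) = p ^ c) (hE2 : μ * (d₂ - d₁ * q) = q ^ c)
    {t : ℝ} (htp : p ≤ t) (htq : t ≤ q) : μ * (d₂ - d₁ * t) ≤ t ^ c := by
  have hq : 0 < q := hp.trans hpq
  have hqp : (0:ℝ) < q - p := by linarith
  set a := (q - t) / (q - p) with ha_def
  set b := (t - p) / (q - p) with hb_def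
  have ha : 0 ≤ a := div_nonneg (by linarith) hqp.le
  have hb : 0 ≤ b := div_nonneg (by linarith) hqp.le
  have hab : a + b = 1 := by rw [ha_def, hb_def, ← add_div, div_eq_one_iff_eq hqp.ne']; ring
  have hta : a * p + b * q = t := by
    rw [ha_def, hb_def, div_mul_eq_mul_div, div_mul_eq_mul_div, ← add_div, div_eq_iff hqp.ne']; ring
  have hcon := (Real.concaveOn_rpow hc0.le hc1.le).2 (mem_Ici.2 hp.le) (mem_Ici.2 hq.le) ha hb hab
  simp only [smul_eq_mul] at hcon
  rw [hta] at hcon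
  calc μ * (d₂ - d₁ * t) = a * (μ * (d₂ - d₁ * p)) + b * (μ * (d₂ - d₁ * q)) := by
        linear_combination (-(μ * d₂)) * hab + (μ * d₁) * hta
    _ = a * p ^ c + b * q ^ c := by rw [hE1, hE2]
    _ ≤ t ^ c := hcon

/-- Superlevel sets of `x₁^a₁ x₂^a₂` are closed under convex combinations (positive points). -/
lemma aux_gm {a₁ a₂ β ℓ : ℝ} (ha₁ : 0 < a₁) (ha₂ : 0 < a₂) (hβ : β = a₁ + a₂) (hℓ : 0 < ℓ)
    {x₁ x₂ y₁ y₂ s t : ℝ} (hx₁ : 0 < x₁) (hx₂ : 0 < x₂) (hy₁ : 0 < y₁) (hy₂ : 0 < y₂)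
    (hs : 0 ≤ s) (ht : 0 ≤ t) (hst : s + t = 1)
    (hx : ℓ ≤ x₁ ^ a₁ * x₂ ^ a₂) (hy : ℓ ≤ y₁ ^ a₁ * y₂ ^ a₂) :
    ℓ ≤ (s * x₁ + t * y₁) ^ a₁ * (s * x₂ + t * y₂) ^ a₂ := by
  have hβ0 : 0 < β := by linarith
  rcases eq_or_lt_of_le hs with hs0 | hs0
  · have : t = 1 := by linarith
    simp [← hs0, this, hy]
  rcases eq_or_lt_of_le ht with ht0 | ht0
  · have : s = 1 := by linarith
    simp [← ht0, this, hx]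
  have hz₁ : 0 < s * x₁ + t * y₁ := by positivity
  have hz₂ : 0 < s * x₂ + t * y₂ := by positivity
  set z₁ := s * x₁ + t * y₁
  set z₂ := s * x₂ + t * y₂
  -- F u v = u^(a₁/β) * v^(a₂/β)
  have hw : a₁ / β + a₂ / β = 1 := by field_simp; linarith
  have hFpow : ∀ u v : ℝ, 0 < u → 0 < v →
      (u ^ (a₁ / β) * v ^ (a₂ / β)) ^ β = u ^ a₁ * v ^ a₂ := by
    intro u v hu hv
    rw [Real.mul_rpow (by positivity) (by positivity), ← Real.rpow_mul hu.le,
      ← Real.rpow_mul hv.le, div_mul_cancel₀ _ hβ0.ne', div_mul_cancel₀ _ hβ0.ne']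
  have hFx : ℓ ^ (1 / β) ≤ x₁ ^ (a₁ / β) * x₂ ^ (a₂ / β) := by
    have h := Real.rpow_le_rpow hℓ.le hx (by positivity : (0:ℝ) ≤ 1 / β)
    rwa [Real.mul_rpow (by positivity) (by positivity), ← Real.rpow_mul hx₁.le,
      ← Real.rpow_mul hx₂.le, mul_one_div, mul_one_div] at h
  have hFy : ℓ ^ (1 / β) ≤ y₁ ^ (a₁ / β) * y₂ ^ (a₂ / β) := by
    have h := Real.rpow_le_rpow hℓ.le hy (by positivity : (0:ℝ) ≤ 1 / β)
    rwa [Real.mul_rpow (by positivity) (by positivity), ← Real.rpow_mul hy₁.le,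
      ← Real.rpow_mul hy₂.le, mul_one_div, mul_one_div] at h
  -- AM-GM for x and y against z
  have hFz : 0 < z₁ ^ (a₁ / β) * z₂ ^ (a₂ / β) := by positivity
  have amgm : ∀ u v : ℝ, 0 < u → 0 < v →
      u ^ (a₁ / β) * v ^ (a₂ / β) ≤ (z₁ ^ (a₁ / β) * z₂ ^ (a₂ / β)) *
        ((a₁ / β) * (u / z₁) + (a₂ / β) * (v / z₂)) := by
    intro u v hu hv
    have h := Real.geom_mean_le_arith_mean2_weighted (by positivity : (0:ℝ) ≤ a₁ / β)
      (by positivity : (0:ℝ) ≤ a₂ / β) (by positivity : (0:ℝ) ≤ u / z₁)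
      (by positivity : (0:ℝ) ≤ v / z₂) hw
    rw [Real.div_rpow hu.le hz₁.le, Real.div_rpow hv.le hz₂.le] at h
    have hexp : u ^ (a₁ / β) / z₁ ^ (a₁ / β) * (v ^ (a₂ / β) / z₂ ^ (a₂ / β)) =
        (u ^ (a₁ / β) * v ^ (a₂ / β)) / (z₁ ^ (a₁ / β) * z₂ ^ (a₂ / β)) := by ring
    rw [hexp, div_le_iff₀ hFz] at h
    linarith [h]
  have hax := amgm x₁ x₂ hx₁ hx₂
  have hay := amgm y₁ y₂ hy₁ hy₂
  have hsum : s * ((a₁ / β) * (x₁ / z₁) + (a₂ / β) * (x₂ / z₂)) +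
      t * ((a₁ / β) * (y₁ / z₁) + (a₂ / β) * (y₂ / z₂)) = 1 := by
    have e1 : s * (x₁ / z₁) + t * (y₁ / z₁) = 1 := by
      field_simp; rfl
    have e2 : s * (x₂ / z₂) + t * (y₂ / z₂) = 1 := by field_simp; rfl
    calc s * ((a₁ / β) * (x₁ / z₁) + (a₂ / β) * (x₂ / z₂)) +
        t * ((a₁ / β) * (y₁ / z₁) + (a₂ / β) * (y₂ / z₂))
        = (a₁ / β) * (s * (x₁ / z₁) + t * (y₁ / z₁)) +
          (a₂ / β) * (s * (x₂ / z₂) + t * (y₂ / z₂)) := by ring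
      _ = 1 := by rw [e1, e2]; linarith [hw]
  have hkey : ℓ ^ (1 / β) ≤ z₁ ^ (a₁ / β) * z₂ ^ (a₂ / β) := by
    nlinarith [mul_le_mul_of_nonneg_left hax hs, mul_le_mul_of_nonneg_left hay ht,
      mul_le_mul_of_nonneg_left hFx hs, mul_le_mul_of_nonneg_left hFy ht]
  have := Real.rpow_le_rpow (by positivity) hkey hβ0.le
  rwa [← Real.rpow_mul hℓ.le, one_div_mul_cancel hβ0.ne', Real.rpow_one, hFpow z₁ z₂ hz₁ hz₂] at this

lemma aux_combo_pos {a b r : ℝ} (ha : 0 < a) (hb : 0 < b) (h0 : 0 ≤ r) (h1 : r ≤ 1) :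
    0 < (1 - r) * a + r * b := by
  rcases le_total a b with h | h
  · calc (0:ℝ) < a := ha
      _ = (1 - r) * a + r * a := by ring
      _ ≤ (1 - r) * a + r * b := add_le_add_right (mul_le_mul_of_nonneg_left h h0) _
  · calc (0:ℝ) < b := hb
      _ = (1 - r) * b + r * b := by ring
      _ ≤ (1 - r) * a + r * b :=
          add_le_add_left (mul_le_mul_of_nonneg_left h (by linarith)) _
set_option maxHeartbeats 1000000 in
/-- For `n = 2` and `β = a₁ + a₂ ≥ 1`, the lower envelope of `f` over
`X ∩ W₁₂` equals `H = {(x,z) : x ∈ Y, z ≥ λ (d₂ x₁ − d₁ x₂)^β, z ≥ ℓ}`. -/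
theorem lower_envelope_n2_of_one_le_beta (a₁ a₂ ℓ u p q β d₁ d₂ lam : ℝ)
    (ha₁ : 0 < a₁) (ha₂ : 0 < a₂) (hβ : β = a₁ + a₂) (hβ1 : 1 ≤ β)
    (hℓ : 0 < ℓ) (hℓu : ℓ < u) (hp : 0 < p) (hpq : p < q)
    (hd₁ : d₁ = q ^ (-(a₂ / β)) - p ^ (-(a₂ / β)))
    (hd₂ : d₂ = q ^ (a₁ / β) - p ^ (a₁ / β))
    (hlam : lam = p ^ a₂ / (d₂ - d₁ * p) ^ β) :
    convexHull ℝ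
      {xz : (ℝ × ℝ) × ℝ |
        ((0 ≤ xz.1.1 ∧ 0 ≤ xz.1.2) ∧
          (ℓ ≤ xz.1.1 ^ a₁ * xz.1.2 ^ a₂ ∧ xz.1.1 ^ a₁ * xz.1.2 ^ a₂ ≤ u) ∧
          (p * xz.1.1 ≤ xz.1.2 ∧ xz.1.2 ≤ q * xz.1.1)) ∧
        xz.1.1 ^ a₁ * xz.1.2 ^ a₂ ≤ xz.2} =
    {xz : (ℝ × ℝ) × ℝ |
        ((0 ≤ xz.1.1 ∧ 0 ≤ xz.1.2) ∧
          (p * xz.1.1 ≤ xz.1.2 ∧ xz.1.2 ≤ q * xz.1.1) ∧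
          ℓ ≤ xz.1.1 ^ a₁ * xz.1.2 ^ a₂ ∧
          d₂ * xz.1.1 - d₁ * xz.1.2 ≤ (u / lam) ^ (1 / β)) ∧
        lam * (d₂ * xz.1.1 - d₁ * xz.1.2) ^ β ≤ xz.2 ∧
        ℓ ≤ xz.2} := by
  have hβ0 : (0:ℝ) < β := lt_of_lt_of_le one_pos hβ1
  have hq : 0 < q := hp.trans hpq
  have hqp : (0:ℝ) < q - p := by linarith
  set c : ℝ := a₂ / β with hc
  have hc0 : 0 < c := by rw [hc]; positivity
  have hc1 : c < 1 := by rw [hc, div_lt_one hβ0]; linarith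
  have hac : a₁ / β = 1 - c := by rw [hc]; field_simp; linarith
  have hcb : c * β = a₂ := by rw [hc]; field_simp
  have hd₂' : d₂ = q ^ (1 - c) - p ^ (1 - c) := by rw [hd₂, hac]
  -- key algebraic identities
  have e1q : q ^ (1 - c) = q ^ (-c) * q := by
    rw [show (1:ℝ) - c = -c + 1 by ring, Real.rpow_add_one hq.ne']
  have e1p : p ^ (1 - c) = p ^ (-c) * p := by
    rw [show (1:ℝ) - c = -c + 1 by ring, Real.rpow_add_one hp.ne']
  have hI1 : d₂ - d₁ * p = q ^ (-c) * (q - p) := by rw [hd₂', hd₁, e1q, e1p]; ring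
  have hI2 : d₂ - d₁ * q = p ^ (-c) * (q - p) := by rw [hd₂', hd₁, e1q, e1p]; ring
  have hqc : 0 < q ^ (-c) := Real.rpow_pos_of_pos hq _
  have hpc : 0 < p ^ (-c) := Real.rpow_pos_of_pos hp _
  have hA0 : 0 < d₂ - d₁ * p := by rw [hI1]; positivity
  have hB0 : 0 < d₂ - d₁ * q := by rw [hI2]; positivity
  have hpqc : p ^ c < q ^ c := Real.rpow_lt_rpow hp.le hpq hc0
  have hpc' : 0 < p ^ c := Real.rpow_pos_of_pos hp _
  have hqc' : 0 < q ^ c := Real.rpow_pos_of_pos hq _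
  have hd₁neg : d₁ < 0 := by
    rw [hd₁, Real.rpow_neg hq.le, Real.rpow_neg hp.le]
    have h2 := one_div_lt_one_div_of_lt hpc' hpqc
    rw [one_div, one_div] at h2
    linarith
  have hd₂pos : 0 < d₂ := by
    rw [hd₂']
    have := Real.rpow_lt_rpow hp.le hpq (by linarith : (0:ℝ) < 1 - c)
    linarith
  have hlam0 : 0 < lam := by
    rw [hlam]
    have : 0 < (d₂ - d₁ * p) ^ β := Real.rpow_pos_of_pos hA0 _
    positivity
  set μ := lam ^ (1/β) with hμ
  have hμ0 : 0 < μ := Real.rpow_pos_of_pos hlam0 _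
  have hμβ : μ ^ β = lam := by
    rw [hμ, ← Real.rpow_mul hlam0.le, one_div_mul_cancel hβ0.ne', Real.rpow_one]
  have hμA : μ = p ^ c / (d₂ - d₁ * p) := by
    rw [hμ, hlam, Real.div_rpow (by positivity) (by positivity), ← Real.rpow_mul hp.le,
      ← Real.rpow_mul hA0.le, mul_one_div, mul_one_div, div_self hβ0.ne', Real.rpow_one, ← hc]
  have hE1 : μ * (d₂ - d₁ * p) = p ^ c := by rw [hμA]; field_simp
  have hpp : p ^ c * p ^ (-c) = 1 := by
    rw [← Real.rpow_add hp]; simp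
  have hqq : q ^ c * q ^ (-c) = 1 := by
    rw [← Real.rpow_add hq]; simp
  have hE2 : μ * (d₂ - d₁ * q) = q ^ c := by
    rw [hμA, hI1, hI2]
    field_simp
    linear_combination hpp - hqq
  have hLnn : ∀ x₁ x₂ : ℝ, 0 ≤ x₁ → 0 ≤ x₂ → 0 ≤ d₂ * x₁ - d₁ * x₂ := by
    intro x₁ x₂ h1 h2
    have e1 : 0 ≤ d₂ * x₁ := mul_nonneg hd₂pos.le h1
    have e2 : 0 ≤ (-d₁) * x₂ := mul_nonneg (by linarith) h2
    calc (0:ℝ) ≤ d₂ * x₁ + (-d₁) * x₂ := add_nonneg e1 e2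
      _ = d₂ * x₁ - d₁ * x₂ := by ring
  -- the main envelope inequality
  have hmain : ∀ x₁ x₂ : ℝ, 0 < x₁ → p * x₁ ≤ x₂ → x₂ ≤ q * x₁ →
      lam * (d₂ * x₁ - d₁ * x₂) ^ β ≤ x₁ ^ a₁ * x₂ ^ a₂ := by
    intro x₁ x₂ hx₁ hpx hqx
    have hx₂ : 0 < x₂ := lt_of_lt_of_le (by positivity) hpx
    have hsp : p ≤ x₂ / x₁ := (le_div_iff₀ hx₁).2 hpx
    have hsq : x₂ / x₁ ≤ q := (div_le_iff₀ hx₁).2 hqx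
    have hs0 : 0 < x₂ / x₁ := lt_of_lt_of_le hp hsp
    have hsec := aux_secant hc0 hc1 hp hpq hE1 hE2 hsp hsq
    have hL : d₂ * x₁ - d₁ * x₂ = x₁ * (d₂ - d₁ * (x₂ / x₁)) := by field_simp
    have hL0 : (0:ℝ) ≤ d₂ - d₁ * (x₂ / x₁) := by
      have e2 : 0 ≤ (-d₁) * (x₂ / x₁) := mul_nonneg (by linarith) hs0.le
      calc (0:ℝ) ≤ d₂ + (-d₁) * (x₂ / x₁) := add_nonneg hd₂pos.le e2
        _ = d₂ - d₁ * (x₂ / x₁) := by ring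
    have hLL0 : (0:ℝ) ≤ d₂ * x₁ - d₁ * x₂ := by rw [hL]; positivity
    have step : μ * (d₂ * x₁ - d₁ * x₂) ≤ x₁ * (x₂ / x₁) ^ c := by
      rw [hL, show μ * (x₁ * (d₂ - d₁ * (x₂ / x₁))) = x₁ * (μ * (d₂ - d₁ * (x₂ / x₁))) from by
        ring]
      exact mul_le_mul_of_nonneg_left hsec hx₁.le
    have lhs_eq : lam * (d₂ * x₁ - d₁ * x₂) ^ β = (μ * (d₂ * x₁ - d₁ * x₂)) ^ β := by
      rw [Real.mul_rpow hμ0.le hLL0, hμβ]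
    have rhs_eq : (x₁ * (x₂ / x₁) ^ c) ^ β = x₁ ^ a₁ * x₂ ^ a₂ := by
      rw [Real.mul_rpow hx₁.le (Real.rpow_nonneg hs0.le _), ← Real.rpow_mul hs0.le]
      rw [hcb, Real.div_rpow hx₂.le hx₁.le, hβ, Real.rpow_add hx₁]
      field_simp
    rw [lhs_eq, ← rhs_eq]
    exact Real.rpow_le_rpow (by positivity) step hβ0.le
  -- positivity of points in the region
  have hposx : ∀ x₁ x₂ : ℝ, 0 ≤ x₁ → 0 ≤ x₂ → x₂ ≤ q * x₁ → ℓ ≤ x₁ ^ a₁ * x₂ ^ a₂ →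
      0 < x₁ ∧ 0 < x₂ := by
    intro x₁ x₂ h01 h02 hqx hfl
    have hx₁ : 0 < x₁ := by
      rcases eq_or_lt_of_le h01 with h | h
      · exfalso
        rw [← h, mul_zero] at hqx
        have hx20 : x₂ = 0 := le_antisymm hqx h02
        rw [← h, hx20, Real.zero_rpow ha₁.ne'] at hfl
        simp at hfl
        linarith
      · exact h
    refine ⟨hx₁, ?_⟩
    rcases eq_or_lt_of_le h02 with h | h
    · exfalso
      rw [← h, Real.zero_rpow ha₂.ne', mul_zero] at hfl
      linarith
    · exact h
  apply Set.Subset.antisymm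
  · apply convexHull_min
    · -- S ⊆ H
      rintro ⟨⟨x₁, x₂⟩, z⟩ ⟨⟨⟨h01, h02⟩, ⟨hfl, hfu⟩, hpx, hqx⟩, hz⟩
      obtain ⟨hx₁, hx₂⟩ := hposx x₁ x₂ h01 h02 hqx hfl
      have henv := hmain x₁ x₂ hx₁ hpx hqx
      have hL0 : (0:ℝ) ≤ d₂ * x₁ - d₁ * x₂ := hLnn x₁ x₂ h01 h02
      refine ⟨⟨⟨h01, h02⟩, ⟨hpx, hqx⟩, hfl, ?_⟩, le_trans henv hz, le_trans hfl hz⟩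
      have h1 : (d₂ * x₁ - d₁ * x₂) ^ β ≤ u / lam := by
        rw [le_div_iff₀ hlam0]
        calc (d₂ * x₁ - d₁ * x₂) ^ β * lam = lam * (d₂ * x₁ - d₁ * x₂) ^ β := by ring
          _ ≤ u := le_trans henv hfu
      have h2 : ((d₂ * x₁ - d₁ * x₂) ^ β) ^ (1/β) ≤ (u / lam) ^ (1/β) :=
        Real.rpow_le_rpow (by positivity) h1 (by positivity)
      rwa [← Real.rpow_mul hL0, mul_one_div, div_self hβ0.ne', Real.rpow_one] at h2
    · -- H is convex
      rintro ⟨⟨x₁, x₂⟩, zx⟩ ⟨⟨⟨hx01, hx02⟩, ⟨hxp, hxq⟩, hxf, hxL⟩, hxz, hxl⟩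
        ⟨⟨y₁, y₂⟩, zy⟩ ⟨⟨⟨hy01, hy02⟩, ⟨hyp, hyq⟩, hyf, hyL⟩, hyz, hyl⟩ s t hs ht hst
      obtain ⟨hx₁, hx₂⟩ := hposx x₁ x₂ hx01 hx02 hxq hxf
      obtain ⟨hy₁, hy₂⟩ := hposx y₁ y₂ hy01 hy02 hyq hyf
      simp only [Prod.smul_mk, Prod.mk_add_mk, smul_eq_mul, Set.mem_setOf_eq]
      have hLx0 : (0:ℝ) ≤ d₂ * x₁ - d₁ * x₂ := hLnn x₁ x₂ hx01 hx02
      have hLy0 : (0:ℝ) ≤ d₂ * y₁ - d₁ * y₂ := hLnn y₁ y₂ hy01 hy02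
      have hsect1 : p * (s * x₁ + t * y₁) ≤ s * x₂ + t * y₂ := by
        have e1 := mul_le_mul_of_nonneg_left hxp hs
        have e2 := mul_le_mul_of_nonneg_left hyp ht
        calc p * (s * x₁ + t * y₁) = s * (p * x₁) + t * (p * y₁) := by ring
          _ ≤ s * x₂ + t * y₂ := add_le_add e1 e2
      have hsect2 : s * x₂ + t * y₂ ≤ q * (s * x₁ + t * y₁) := by
        have e1 := mul_le_mul_of_nonneg_left hxq hs
        have e2 := mul_le_mul_of_nonneg_left hyq ht
        calc s * x₂ + t * y₂ ≤ s * (q * x₁) + t * (q * y₁) := add_le_add e1 e2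
          _ = q * (s * x₁ + t * y₁) := by ring
      have hCL : d₂ * (s * x₁ + t * y₁) - d₁ * (s * x₂ + t * y₂) ≤ (u / lam) ^ (1/β) := by
        have e1 := mul_le_mul_of_nonneg_left hxL hs
        have e2 := mul_le_mul_of_nonneg_left hyL ht
        have e3 : s * ((u / lam) ^ (1/β)) + t * ((u / lam) ^ (1/β)) = (u / lam) ^ (1/β) := by
          rw [← add_mul, hst, one_mul]
        calc d₂ * (s * x₁ + t * y₁) - d₁ * (s * x₂ + t * y₂)
            = s * (d₂ * x₁ - d₁ * x₂) + t * (d₂ * y₁ - d₁ * y₂) := by ring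
          _ ≤ s * ((u / lam) ^ (1/β)) + t * ((u / lam) ^ (1/β)) := add_le_add e1 e2
          _ = (u / lam) ^ (1/β) := e3
      have hzl : ℓ ≤ s * zx + t * zy := by
        have e1 := mul_le_mul_of_nonneg_left hxl hs
        have e2 := mul_le_mul_of_nonneg_left hyl ht
        calc ℓ = s * ℓ + t * ℓ := by rw [← add_mul, hst, one_mul]
          _ ≤ s * zx + t * zy := add_le_add e1 e2
      refine ⟨⟨⟨by positivity, by positivity⟩, ⟨hsect1, hsect2⟩,
        aux_gm ha₁ ha₂ hβ hℓ hx₁ hx₂ hy₁ hy₂ hs ht hst hxf hyf, hCL⟩, ?_, hzl⟩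
      have hcvx := (convexOn_rpow hβ1).2 (Set.mem_Ici.2 hLx0) (Set.mem_Ici.2 hLy0) hs ht hst
      simp only [smul_eq_mul] at hcvx
      have heq : d₂ * (s * x₁ + t * y₁) - d₁ * (s * x₂ + t * y₂) =
          s * (d₂ * x₁ - d₁ * x₂) + t * (d₂ * y₁ - d₁ * y₂) := by ring
      rw [heq]
      calc lam * (s * (d₂ * x₁ - d₁ * x₂) + t * (d₂ * y₁ - d₁ * y₂)) ^ β
          ≤ lam * (s * (d₂ * x₁ - d₁ * x₂) ^ β + t * (d₂ * y₁ - d₁ * y₂) ^ β) :=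
            mul_le_mul_of_nonneg_left hcvx hlam0.le
        _ = s * (lam * (d₂ * x₁ - d₁ * x₂) ^ β) + t * (lam * (d₂ * y₁ - d₁ * y₂) ^ β) := by ring
        _ ≤ s * zx + t * zy :=
            add_le_add (mul_le_mul_of_nonneg_left hxz hs) (mul_le_mul_of_nonneg_left hyz ht)
  · -- H ⊆ convexHull S
    rintro ⟨⟨x₁, x₂⟩, z⟩ ⟨⟨⟨h01, h02⟩, ⟨hpx, hqx⟩, hfl, hLu⟩, hzL, hzl⟩
    obtain ⟨hx₁, hx₂⟩ := hposx x₁ x₂ h01 h02 hqx hfl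
    have hu : 0 < u := lt_trans hℓ hℓu
    set m := d₂ * x₁ - d₁ * x₂ with hm
    have hm0 : 0 < m := by
      have e2 : 0 ≤ (-d₁) * x₂ := mul_nonneg (by linarith) h02
      have e1 : 0 < d₂ * x₁ := mul_pos hd₂pos hx₁
      calc (0:ℝ) < d₂ * x₁ + (-d₁) * x₂ := by linarith
        _ = m := by rw [hm]; ring
    have hmne : d₂ * x₁ - d₁ * x₂ ≠ 0 := by rw [← hm]; exact hm0.ne'
    have hvA : 0 < m / (d₂ - d₁ * p) := div_pos hm0 hA0
    have hwB : 0 < m / (d₂ - d₁ * q) := div_pos hm0 hB0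
    have hv2 : 0 < p * (m / (d₂ - d₁ * p)) := mul_pos hp hvA
    have hw2 : 0 < q * (m / (d₂ - d₁ * q)) := mul_pos hq hwB
    -- function values on the two rays
    have hfv : (m / (d₂ - d₁ * p)) ^ a₁ * (p * (m / (d₂ - d₁ * p))) ^ a₂ = lam * m ^ β := by
      rw [Real.mul_rpow hp.le hvA.le,
        show (m / (d₂ - d₁ * p)) ^ a₁ * (p ^ a₂ * (m / (d₂ - d₁ * p)) ^ a₂)
          = (m / (d₂ - d₁ * p)) ^ a₁ * (m / (d₂ - d₁ * p)) ^ a₂ * p ^ a₂ from by ring,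
        ← Real.rpow_add hvA, ← hβ, Real.div_rpow hm0.le hA0.le, hlam]
      ring
    have hPB : p ^ a₂ * (d₂ - d₁ * q) ^ β = q ^ a₂ * (d₂ - d₁ * p) ^ β := by
      have h1 : p ^ c * (d₂ - d₁ * q) = q ^ c * (d₂ - d₁ * p) := by
        rw [← hE1, ← hE2]; ring
      have h2 := congrArg (fun r : ℝ => r ^ β) h1
      rwa [Real.mul_rpow hpc'.le hB0.le, Real.mul_rpow hqc'.le hA0.le,
        ← Real.rpow_mul hp.le, ← Real.rpow_mul hq.le, hcb] at h2
    have hAβ : (0:ℝ) < (d₂ - d₁ * p) ^ β := Real.rpow_pos_of_pos hA0 _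
    have hBβ : (0:ℝ) < (d₂ - d₁ * q) ^ β := Real.rpow_pos_of_pos hB0 _
    have hfw : (m / (d₂ - d₁ * q)) ^ a₁ * (q * (m / (d₂ - d₁ * q))) ^ a₂ = lam * m ^ β := by
      rw [Real.mul_rpow hq.le hwB.le,
        show (m / (d₂ - d₁ * q)) ^ a₁ * (q ^ a₂ * (m / (d₂ - d₁ * q)) ^ a₂)
          = (m / (d₂ - d₁ * q)) ^ a₁ * (m / (d₂ - d₁ * q)) ^ a₂ * q ^ a₂ from by ring,
        ← Real.rpow_add hwB, ← hβ, Real.div_rpow hm0.le hB0.le, hlam]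
      field_simp
      linear_combination (-1:ℝ) * hPB
    have hfu' : lam * m ^ β ≤ u := by
      have hul : (0:ℝ) ≤ u / lam := by positivity
      have h1 : m ^ β ≤ ((u / lam) ^ (1/β)) ^ β := Real.rpow_le_rpow hm0.le hLu hβ0.le
      rw [← Real.rpow_mul hul, one_div_mul_cancel hβ0.ne', Real.rpow_one] at h1
      calc lam * m ^ β ≤ lam * (u / lam) := mul_le_mul_of_nonneg_left h1 hlam0.le
        _ = u := by field_simp
    set θ := (x₂ - p * x₁) * (d₂ - d₁ * q) / ((q - p) * m) with hθdef
    have hθ0 : 0 ≤ θ := by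
      apply div_nonneg (mul_nonneg (by linarith) hB0.le) (mul_nonneg hqp.le hm0.le)
    have hkey : (q - p) * m = (x₂ - p * x₁) * (d₂ - d₁ * q) + (q * x₁ - x₂) * (d₂ - d₁ * p) := by
      rw [hm]; ring
    have hθ1 : θ ≤ 1 := by
      rw [hθdef, div_le_one (mul_pos hqp hm0)]
      have e1 : 0 ≤ (q * x₁ - x₂) * (d₂ - d₁ * p) := mul_nonneg (by linarith) hA0.le
      linarith [hkey, e1]
    have hco1 : (1 - θ) * (m / (d₂ - d₁ * p)) + θ * (m / (d₂ - d₁ * q)) = x₁ := by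
      simp only [hθdef]
      have hkey' := hkey
      have hA' := hA0
      have hB' := hB0
      generalize d₂ - d₁ * p = A at hkey' hA' ⊢
      generalize d₂ - d₁ * q = B at hkey' hB' ⊢
      field_simp
      linear_combination (1:ℝ) * hkey'
    have hco2 : (1 - θ) * (p * (m / (d₂ - d₁ * p))) + θ * (q * (m / (d₂ - d₁ * q))) = x₂ := by
      simp only [hθdef]
      have hkey' := hkey
      have hA' := hA0
      have hB' := hB0
      generalize d₂ - d₁ * p = A at hkey' hA' ⊢
      generalize d₂ - d₁ * q = B at hkey' hB' ⊢
      field_simp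
      linear_combination p * hkey'
    by_cases hcase : ℓ ≤ lam * m ^ β
    · -- two endpoints at height lam * m ^ β
      have hV : (((m / (d₂ - d₁ * p), p * (m / (d₂ - d₁ * p))), z) : (ℝ × ℝ) × ℝ) ∈
          {xz : (ℝ × ℝ) × ℝ |
            ((0 ≤ xz.1.1 ∧ 0 ≤ xz.1.2) ∧
              (ℓ ≤ xz.1.1 ^ a₁ * xz.1.2 ^ a₂ ∧ xz.1.1 ^ a₁ * xz.1.2 ^ a₂ ≤ u) ∧
              (p * xz.1.1 ≤ xz.1.2 ∧ xz.1.2 ≤ q * xz.1.1)) ∧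
            xz.1.1 ^ a₁ * xz.1.2 ^ a₂ ≤ xz.2} := by
        refine ⟨⟨⟨hvA.le, hv2.le⟩, ⟨by rw [hfv]; exact hcase, by rw [hfv]; exact hfu'⟩,
          le_refl _, mul_le_mul_of_nonneg_right hpq.le hvA.le⟩, by rw [hfv]; exact hzL⟩
      have hW : (((m / (d₂ - d₁ * q), q * (m / (d₂ - d₁ * q))), z) : (ℝ × ℝ) × ℝ) ∈
          {xz : (ℝ × ℝ) × ℝ |
            ((0 ≤ xz.1.1 ∧ 0 ≤ xz.1.2) ∧
              (ℓ ≤ xz.1.1 ^ a₁ * xz.1.2 ^ a₂ ∧ xz.1.1 ^ a₁ * xz.1.2 ^ a₂ ≤ u) ∧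
              (p * xz.1.1 ≤ xz.1.2 ∧ xz.1.2 ≤ q * xz.1.1)) ∧
            xz.1.1 ^ a₁ * xz.1.2 ^ a₂ ≤ xz.2} := by
        refine ⟨⟨⟨hwB.le, hw2.le⟩, ⟨by rw [hfw]; exact hcase, by rw [hfw]; exact hfu'⟩,
          mul_le_mul_of_nonneg_right hpq.le hwB.le, le_refl _⟩, by rw [hfw]; exact hzL⟩
      apply segment_subset_convexHull hV hW
      refine ⟨1 - θ, θ, by linarith, hθ0, by ring, ?_⟩
      simp only [Prod.smul_mk, smul_eq_mul, Prod.mk_add_mk, Prod.mk.injEq]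
      exact ⟨⟨hco1, hco2⟩, by ring⟩
    · push_neg at hcase
      set g : ℝ → ℝ := fun r =>
        ((1 - r) * (m / (d₂ - d₁ * p)) + r * (m / (d₂ - d₁ * q))) ^ a₁ *
        ((1 - r) * (p * (m / (d₂ - d₁ * p))) + r * (q * (m / (d₂ - d₁ * q)))) ^ a₂ with hg
      have hgcont : ContinuousOn g (Set.Icc (0:ℝ) 1) := by
        rw [hg]
        apply ContinuousOn.mul
        · apply ContinuousOn.rpow_const
          · fun_prop
          · intro r hr
            exact Or.inl (aux_combo_pos hvA hwB hr.1 hr.2).ne'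
        · apply ContinuousOn.rpow_const
          · fun_prop
          · intro r hr
            exact Or.inl (aux_combo_pos hv2 hw2 hr.1 hr.2).ne'
      have hg0 : g 0 = lam * m ^ β := by
        simp only [hg]
        rw [show (1 - (0:ℝ)) * (m / (d₂ - d₁ * p)) + 0 * (m / (d₂ - d₁ * q))
            = m / (d₂ - d₁ * p) from by ring,
          show (1 - (0:ℝ)) * (p * (m / (d₂ - d₁ * p))) + 0 * (q * (m / (d₂ - d₁ * q)))
            = p * (m / (d₂ - d₁ * p)) from by ring]
        exact hfv
      have hg1 : g 1 = lam * m ^ β := by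
        simp only [hg]
        rw [show (1 - (1:ℝ)) * (m / (d₂ - d₁ * p)) + 1 * (m / (d₂ - d₁ * q))
            = m / (d₂ - d₁ * q) from by ring,
          show (1 - (1:ℝ)) * (p * (m / (d₂ - d₁ * p))) + 1 * (q * (m / (d₂ - d₁ * q)))
            = q * (m / (d₂ - d₁ * q)) from by ring]
        exact hfw
      have hgθ : g θ = x₁ ^ a₁ * x₂ ^ a₂ := by
        simp only [hg]
        rw [hco1, hco2]
      have hmem1 : ℓ ∈ Set.Icc (g 0) (g θ) := ⟨by rw [hg0]; linarith, by rw [hgθ]; exact hfl⟩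
      obtain ⟨r₁, hr₁, hgr₁⟩ := intermediate_value_Icc hθ0
        (hgcont.mono (Set.Icc_subset_Icc le_rfl hθ1)) hmem1
      have hmem2 : ℓ ∈ Set.Icc (g 1) (g θ) := ⟨by rw [hg1]; linarith, by rw [hgθ]; exact hfl⟩
      obtain ⟨r₂, hr₂, hgr₂⟩ := intermediate_value_Icc' hθ1
        (hgcont.mono (Set.Icc_subset_Icc hθ0 le_rfl)) hmem2
      have hSmem : ∀ r : ℝ, 0 ≤ r → r ≤ 1 → g r = ℓ →
          ((((1 - r) * (m / (d₂ - d₁ * p)) + r * (m / (d₂ - d₁ * q)),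
             (1 - r) * (p * (m / (d₂ - d₁ * p))) + r * (q * (m / (d₂ - d₁ * q)))), z) :
            (ℝ × ℝ) × ℝ) ∈
          {xz : (ℝ × ℝ) × ℝ |
            ((0 ≤ xz.1.1 ∧ 0 ≤ xz.1.2) ∧
              (ℓ ≤ xz.1.1 ^ a₁ * xz.1.2 ^ a₂ ∧ xz.1.1 ^ a₁ * xz.1.2 ^ a₂ ≤ u) ∧
              (p * xz.1.1 ≤ xz.1.2 ∧ xz.1.2 ≤ q * xz.1.1)) ∧
            xz.1.1 ^ a₁ * xz.1.2 ^ a₂ ≤ xz.2} := by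
        intro r h0 h1 hgr
        have hfeq : ((1 - r) * (m / (d₂ - d₁ * p)) + r * (m / (d₂ - d₁ * q))) ^ a₁ *
            ((1 - r) * (p * (m / (d₂ - d₁ * p))) + r * (q * (m / (d₂ - d₁ * q)))) ^ a₂ = ℓ := by
          rw [← hgr]
        have hsec1 : p * ((1 - r) * (m / (d₂ - d₁ * p)) + r * (m / (d₂ - d₁ * q))) ≤
            (1 - r) * (p * (m / (d₂ - d₁ * p))) + r * (q * (m / (d₂ - d₁ * q))) := by
          have e : (1 - r) * (p * (m / (d₂ - d₁ * p))) + r * (q * (m / (d₂ - d₁ * q))) -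
              p * ((1 - r) * (m / (d₂ - d₁ * p)) + r * (m / (d₂ - d₁ * q)))
              = r * ((q - p) * (m / (d₂ - d₁ * q))) := by ring
          have e2 : 0 ≤ r * ((q - p) * (m / (d₂ - d₁ * q))) :=
            mul_nonneg h0 (mul_nonneg hqp.le hwB.le)
          linarith [e, e2]
        have hsec2 : (1 - r) * (p * (m / (d₂ - d₁ * p))) + r * (q * (m / (d₂ - d₁ * q))) ≤
            q * ((1 - r) * (m / (d₂ - d₁ * p)) + r * (m / (d₂ - d₁ * q))) := by
          have e : q * ((1 - r) * (m / (d₂ - d₁ * p)) + r * (m / (d₂ - d₁ * q))) -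
              ((1 - r) * (p * (m / (d₂ - d₁ * p))) + r * (q * (m / (d₂ - d₁ * q))))
              = (1 - r) * ((q - p) * (m / (d₂ - d₁ * p))) := by ring
          have e2 : 0 ≤ (1 - r) * ((q - p) * (m / (d₂ - d₁ * p))) :=
            mul_nonneg (by linarith) (mul_nonneg hqp.le hvA.le)
          linarith [e, e2]
        exact ⟨⟨⟨(aux_combo_pos hvA hwB h0 h1).le, (aux_combo_pos hv2 hw2 h0 h1).le⟩,
          ⟨le_of_eq hfeq.symm, by rw [hfeq]; linarith⟩, hsec1, hsec2⟩, by rw [hfeq]; exact hzl⟩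
      by_cases hrr : r₁ < r₂
      · have hd : (0:ℝ) < r₂ - r₁ := by linarith
        set ν := (θ - r₁) / (r₂ - r₁) with hν
        have hν0 : 0 ≤ ν := div_nonneg (by linarith [hr₁.2]) hd.le
        have hν1 : ν ≤ 1 := by
          rw [hν, div_le_one hd]
          linarith [hr₂.1]
        have hθν : (1 - ν) * r₁ + ν * r₂ = θ := by
          rw [hν]; field_simp; ring
        apply segment_subset_convexHull (hSmem r₁ hr₁.1 (le_trans hr₁.2 hθ1) hgr₁)
          (hSmem r₂ (le_trans hθ0 hr₂.1) hr₂.2 hgr₂)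
        refine ⟨1 - ν, ν, by linarith, hν0, by ring, ?_⟩
        simp only [Prod.smul_mk, smul_eq_mul, Prod.mk_add_mk, Prod.mk.injEq]
        refine ⟨⟨?_, ?_⟩, by ring⟩
        · rw [← hco1, ← hθν]; ring
        · rw [← hco2, ← hθν]; ring
      · have heqr : r₁ = r₂ := le_antisymm (le_trans hr₁.2 hr₂.1) (not_lt.1 hrr)
        have hθr : θ = r₁ := le_antisymm (by rw [heqr]; exact hr₂.1) hr₁.2
        have hfx : x₁ ^ a₁ * x₂ ^ a₂ = ℓ := by rw [← hgθ, hθr, hgr₁]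
        apply subset_convexHull
        exact ⟨⟨⟨h01, h02⟩, ⟨hfl, by rw [hfx]; linarith⟩, hpx, hqx⟩, by rw [hfx]; exact hzl⟩
end

section
/- For n = 2 and β = a₁ + a₂ ≤ 1, the lower envelope of f over X ∩ W₁₂, i.e. the convex hull of the epigraph {(x,z) ∈ (X ∩ W₁₂) × ℝ : z ≥ f(x)}, equals H = {(x,z) ∈ ℝ₊² × ℝ : x ∈ Y, z ≥ ζ (d₂ x₁ − d₁ x₂) + z₀, and z ≥ ℓ}. -/
open Real Set

private lemma combo_mem {S : Set ((ℝ × ℝ) × ℝ)} {A B : (ℝ × ℝ) × ℝ}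
    (hA : A ∈ convexHull ℝ S) (hB : B ∈ convexHull ℝ S) {μ ν x₁ x₂ z : ℝ}
    (hμ : 0 ≤ μ) (hν : 0 ≤ ν) (h1 : μ + ν = 1)
    (e1 : μ * A.1.1 + ν * B.1.1 = x₁) (e2 : μ * A.1.2 + ν * B.1.2 = x₂)
    (e3 : μ * A.2 + ν * B.2 = z) :
    ((x₁, x₂), z) ∈ convexHull ℝ S := by
  have h := convex_convexHull ℝ S hA hB hμ hν h1
  have : μ • A + ν • B = ((x₁, x₂), z) := by
    obtain ⟨⟨a1, a2⟩, a3⟩ := A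
    obtain ⟨⟨b1, b2⟩, b3⟩ := B
    simp only [Prod.smul_mk, smul_eq_mul, Prod.mk_add_mk] at *
    exact congrArg₂ _ (congrArg₂ _ e1 e2) e3
  rwa [this] at h

private lemma amgm_level {a₁ a₂ ℓ θ τ x₁ x₂ y₁ y₂ : ℝ}
    (ha₁ : 0 < a₁) (ha₂ : 0 < a₂) (hℓ : 0 < ℓ)
    (hx₁ : 0 ≤ x₁) (hx₂ : 0 ≤ x₂) (hy₁ : 0 ≤ y₁) (hy₂ : 0 ≤ y₂)
    (hθ : 0 ≤ θ) (hτ : 0 ≤ τ) (hθτ : θ + τ = 1)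
    (hfx : ℓ ≤ x₁ ^ a₁ * x₂ ^ a₂) (hfy : ℓ ≤ y₁ ^ a₁ * y₂ ^ a₂) :
    ℓ ≤ (θ * x₁ + τ * y₁) ^ a₁ * (θ * x₂ + τ * y₂) ^ a₂ := by
  have k1 : x₁ ^ θ * y₁ ^ τ ≤ θ * x₁ + τ * y₁ :=
    Real.geom_mean_le_arith_mean2_weighted hθ hτ hx₁ hy₁ hθτ
  have k2 : x₂ ^ θ * y₂ ^ τ ≤ θ * x₂ + τ * y₂ :=
    Real.geom_mean_le_arith_mean2_weighted hθ hτ hx₂ hy₂ hθτ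
  calc ℓ = ℓ ^ θ * ℓ ^ τ := by rw [← Real.rpow_add hℓ, hθτ, Real.rpow_one]
    _ ≤ (x₁ ^ a₁ * x₂ ^ a₂) ^ θ * (y₁ ^ a₁ * y₂ ^ a₂) ^ τ := by
        apply mul_le_mul (Real.rpow_le_rpow hℓ.le hfx hθ) (Real.rpow_le_rpow hℓ.le hfy hτ)
          (Real.rpow_nonneg hℓ.le τ) (Real.rpow_nonneg (by positivity) θ)
    _ = (x₁ ^ θ * y₁ ^ τ) ^ a₁ * (x₂ ^ θ * y₂ ^ τ) ^ a₂ := by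
        rw [Real.mul_rpow (by positivity) (by positivity),
            Real.mul_rpow (by positivity) (by positivity),
            Real.mul_rpow (by positivity) (by positivity),
            Real.mul_rpow (by positivity) (by positivity),
            ← Real.rpow_mul hx₁, ← Real.rpow_mul hx₂, ← Real.rpow_mul hy₁, ← Real.rpow_mul hy₂,
            ← Real.rpow_mul hx₁, ← Real.rpow_mul hy₁, ← Real.rpow_mul hx₂, ← Real.rpow_mul hy₂]
        ring_nf
    _ ≤ (θ * x₁ + τ * y₁) ^ a₁ * (θ * x₂ + τ * y₂) ^ a₂ := by
        apply mul_le_mul (Real.rpow_le_rpow (by positivity) k1 ha₁.le)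
          (Real.rpow_le_rpow (by positivity) k2 ha₂.le)
          (Real.rpow_nonneg (by positivity) _) (Real.rpow_nonneg (by positivity) _)

set_option maxHeartbeats 1000000 in
/-- For `n = 2` and `β = a₁ + a₂ ≤ 1`, the lower envelope of `f` over
`X ∩ W₁₂` equals `H = {(x,z) : x ∈ Y, z ≥ ζ (d₂ x₁ − d₁ x₂) + z₀, z ≥ ℓ}`. -/
theorem lower_envelope_n2_of_beta_le_one (a₁ a₂ ℓ u p q β d₁ d₂ lam z₀ ζ : ℝ)
    (ha₁ : 0 < a₁) (ha₂ : 0 < a₂) (hβ : β = a₁ + a₂) (hβ1 : β ≤ 1)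
    (hℓ : 0 < ℓ) (hℓu : ℓ < u) (hp : 0 < p) (hpq : p < q)
    (hd₁ : d₁ = q ^ (-(a₂ / β)) - p ^ (-(a₂ / β)))
    (hd₂ : d₂ = q ^ (a₁ / β) - p ^ (a₁ / β))
    (hlam : lam = p ^ a₂ / (d₂ - d₁ * p) ^ β)
    (hz₀ : z₀ = (u ^ (1 / β) * ℓ - ℓ ^ (1 / β) * u) / (u ^ (1 / β) - ℓ ^ (1 / β)))
    (hζ : ζ = lam ^ (1 / β) * (u - ℓ) / (u ^ (1 / β) - ℓ ^ (1 / β))) :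
    convexHull ℝ
      {xz : (ℝ × ℝ) × ℝ |
        ((0 ≤ xz.1.1 ∧ 0 ≤ xz.1.2) ∧
          (ℓ ≤ xz.1.1 ^ a₁ * xz.1.2 ^ a₂ ∧ xz.1.1 ^ a₁ * xz.1.2 ^ a₂ ≤ u) ∧
          (p * xz.1.1 ≤ xz.1.2 ∧ xz.1.2 ≤ q * xz.1.1)) ∧
        xz.1.1 ^ a₁ * xz.1.2 ^ a₂ ≤ xz.2} =
    {xz : (ℝ × ℝ) × ℝ |
        ((0 ≤ xz.1.1 ∧ 0 ≤ xz.1.2) ∧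
          (p * xz.1.1 ≤ xz.1.2 ∧ xz.1.2 ≤ q * xz.1.1) ∧
          ℓ ≤ xz.1.1 ^ a₁ * xz.1.2 ^ a₂ ∧
          d₂ * xz.1.1 - d₁ * xz.1.2 ≤ (u / lam) ^ (1 / β)) ∧
        ζ * (d₂ * xz.1.1 - d₁ * xz.1.2) + z₀ ≤ xz.2 ∧
        ℓ ≤ xz.2} := by
  have hβ0 : 0 < β := by rw [hβ]; linarith
  have hq : 0 < q := hp.trans hpq
  have hu : 0 < u := hℓ.trans hℓu
  have hqp : 0 < q - p := by linarith
  have hc0 : 0 < a₂ / β := by positivity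
  have hc1 : a₂ / β < 1 := by rw [div_lt_one hβ0]; rw [hβ]; linarith
  have hd₂0 : 0 < d₂ := by
    rw [hd₂]; have := Real.rpow_lt_rpow hp.le hpq (by positivity : (0:ℝ) < a₁ / β); linarith
  have hd₁0 : d₁ < 0 := by
    rw [hd₁, Real.rpow_neg hq.le, Real.rpow_neg hp.le]
    have h1 : p ^ (a₂ / β) < q ^ (a₂ / β) := Real.rpow_lt_rpow hp.le hpq hc0
    have h2 : (0:ℝ) < p ^ (a₂ / β) := Real.rpow_pos_of_pos hp _
    have := inv_strictAnti₀ h2 h1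
    linarith
  have hDt0 : ∀ t : ℝ, 0 ≤ t → 0 < d₂ - d₁ * t := fun t ht => by nlinarith
  -- exponent identities
  have ha1β : a₁ / β = -(a₂ / β) + 1 := by field_simp; rw [hβ]; ring
  have hq1 : q ^ (a₁ / β) = q ^ (-(a₂ / β)) * q := by
    rw [ha1β, Real.rpow_add hq, Real.rpow_one]
  have hp1 : p ^ (a₁ / β) = p ^ (-(a₂ / β)) * p := by
    rw [ha1β, Real.rpow_add hp, Real.rpow_one]
  have hDp : d₂ - d₁ * p = q ^ (-(a₂ / β)) * (q - p) := by rw [hd₁, hd₂, hq1, hp1]; ring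
  have hDq : d₂ - d₁ * q = p ^ (-(a₂ / β)) * (q - p) := by rw [hd₁, hd₂, hq1, hp1]; ring
  have hnegc : ∀ x : ℝ, 0 < x → (x ^ (-(a₂ / β))) ^ β = (x ^ a₂)⁻¹ := fun x hx => by
    rw [← Real.rpow_mul hx.le, show -(a₂ / β) * β = -a₂ by field_simp, Real.rpow_neg hx.le]
  have hlam' : lam = p ^ a₂ * q ^ a₂ / (q - p) ^ β := by
    rw [hlam, hDp, Real.mul_rpow (by positivity) hqp.le, hnegc q hq]
    rw [div_eq_div_iff (by positivity) (by positivity)]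
    field_simp
  have hlamq : lam = q ^ a₂ / (d₂ - d₁ * q) ^ β := by
    rw [hDq, Real.mul_rpow (by positivity) hqp.le, hnegc p hp, hlam']
    rw [div_eq_div_iff (by positivity) (by positivity)]
    field_simp
  have hlam0 : 0 < lam := by rw [hlam']; positivity
  have hβinv : 1 / β * β = 1 := by field_simp
  have hβinv' : β * (1 / β) = 1 := by field_simp
  have hlamroot : lam ^ (1 / β) = p ^ (a₂ / β) * q ^ (a₂ / β) / (q - p) := by
    rw [hlam', Real.div_rpow (by positivity) (by positivity),
        Real.mul_rpow (by positivity) (by positivity),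
        ← Real.rpow_mul hp.le, ← Real.rpow_mul hq.le,
        ← Real.rpow_mul hqp.le, hβinv', Real.rpow_one,
        show a₂ * (1 / β) = a₂ / β by ring]
  set sl : ℝ := (ℓ / lam) ^ (1 / β) with hsl_def
  set su : ℝ := (u / lam) ^ (1 / β) with hsu_def
  have hsl0 : 0 < sl := Real.rpow_pos_of_pos (by positivity) _
  have hsu0 : 0 < su := Real.rpow_pos_of_pos (by positivity) _
  have hslβ : lam * sl ^ β = ℓ := by
    rw [hsl_def, ← Real.rpow_mul (by positivity), hβinv, Real.rpow_one]
    field_simp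
  have hsuβ : lam * su ^ β = u := by
    rw [hsu_def, ← Real.rpow_mul (by positivity), hβinv, Real.rpow_one]
    field_simp
  have hslsu : sl < su := by
    apply Real.rpow_lt_rpow (by positivity) _ (by positivity)
    exact div_lt_div_of_pos_right hℓu hlam0
  have hUL : 0 < u ^ (1/β) - ℓ ^ (1/β) := by
    have := Real.rpow_lt_rpow hℓ.le hℓu (by positivity : (0:ℝ) < 1/β)
    linarith
  have hζ0 : 0 < ζ := by
    rw [hζ]
    have : (0:ℝ) < lam ^ (1/β) := Real.rpow_pos_of_pos hlam0 _
    have h2 : (0:ℝ) < u - ℓ := by linarith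
    positivity
  have hsl_eq : sl = ℓ ^ (1/β) / lam ^ (1/β) := by
    rw [hsl_def, Real.div_rpow hℓ.le hlam0.le]
  have hsu_eq : su = u ^ (1/β) / lam ^ (1/β) := by
    rw [hsu_def, Real.div_rpow hu.le hlam0.le]
  have hlr0 : (0:ℝ) < lam ^ (1/β) := Real.rpow_pos_of_pos hlam0 _
  have hULne : u ^ (1/β) - ℓ ^ (1/β) ≠ 0 := ne_of_gt hUL
  have hlrne : lam ^ (1/β) ≠ 0 := ne_of_gt hlr0
  have hζl : ζ * sl + z₀ = ℓ := by
    rw [hζ, hz₀, hsl_eq]; field_simp; ring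
  have hζu : ζ * su + z₀ = u := by
    rw [hζ, hz₀, hsu_eq]; field_simp; ring
  -- chord below the curve on [sl, su]
  have hchordφ : ∀ σ : ℝ, sl ≤ σ → σ ≤ su → ζ * σ + z₀ ≤ lam * σ ^ β := by
    intro σ h1 h2
    set θ : ℝ := (su - σ) / (su - sl) with hθdef
    set τ : ℝ := (σ - sl) / (su - sl) with hτdef
    have hsusl : 0 < su - sl := by linarith
    have hθ0 : 0 ≤ θ := div_nonneg (by linarith) hsusl.le
    have hτ0 : 0 ≤ τ := div_nonneg (by linarith) hsusl.le
    have hθτ : θ + τ = 1 := by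
      rw [hθdef, hτdef, ← add_div, div_eq_one_iff_eq hsusl.ne']; ring
    have hmix : θ * sl + τ * su = σ := by
      rw [hθdef, hτdef, div_mul_eq_mul_div, div_mul_eq_mul_div, ← add_div,
          div_eq_iff hsusl.ne']; ring
    have hcc := (Real.concaveOn_rpow hβ0.le hβ1).2 (mem_Ici.2 hsl0.le) (mem_Ici.2 hsu0.le) hθ0 hτ0 hθτ
    simp only [smul_eq_mul] at hcc
    rw [hmix] at hcc
    have h3 : lam * (θ * sl ^ β + τ * su ^ β) ≤ lam * σ ^ β :=
      mul_le_mul_of_nonneg_left hcc hlam0.le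
    have : θ * (lam * sl ^ β) + τ * (lam * su ^ β) ≤ lam * σ ^ β := by
      calc θ * (lam * sl ^ β) + τ * (lam * su ^ β) = lam * (θ * sl ^ β + τ * su ^ β) := by ring
        _ ≤ lam * σ ^ β := h3
    rw [hslβ, hsuβ] at this
    calc ζ * σ + z₀ = θ * ℓ + τ * u := by
          rw [← hmix]; linear_combination θ * hζl + τ * hζu - z₀ * hθτ
      _ ≤ lam * σ ^ β := this
  -- f on a ray of slope t
  have hf_ray : ∀ t σ : ℝ, 0 < t → 0 < σ →
      (σ/(d₂-d₁*t))^a₁ * (σ*t/(d₂-d₁*t))^a₂ = σ^β * (t^a₂ / (d₂-d₁*t)^β) := by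
    intro t σ ht hσ
    have hD : 0 < d₂ - d₁ * t := hDt0 t ht.le
    rw [Real.div_rpow hσ.le hD.le, Real.div_rpow (by positivity) hD.le,
        Real.mul_rpow hσ.le ht.le, div_mul_div_comm,
        show σ ^ a₁ * (σ ^ a₂ * t ^ a₂) = σ ^ a₁ * σ ^ a₂ * t ^ a₂ by ring,
        ← Real.rpow_add hσ, ← Real.rpow_add hD, ← hβ]
    ring
  -- the key inequality
  have hK : ∀ x₁ x₂ : ℝ, 0 ≤ x₁ → 0 ≤ x₂ → p * x₁ ≤ x₂ → x₂ ≤ q * x₁ →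
      lam * (d₂ * x₁ - d₁ * x₂) ^ β ≤ x₁ ^ a₁ * x₂ ^ a₂ := by
    intro x₁ x₂ hx₁ hx₂ hcp hcq
    rcases eq_or_lt_of_le hx₁ with h0 | hx₁p
    · have hx20 : x₂ = 0 := le_antisymm (by rw [← h0] at hcq; simpa using hcq) hx₂
      rw [← h0, hx20]
      norm_num [Real.zero_rpow hβ0.ne', Real.zero_rpow ha₁.ne']
    · set t := x₂ / x₁ with htdef
      have hx2t : x₂ = t * x₁ := by rw [htdef, div_mul_cancel₀ _ hx₁p.ne']
      have hpt : p ≤ t := (le_div_iff₀ hx₁p).2 (by linarith)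
      have htq : t ≤ q := (div_le_iff₀ hx₁p).2 (by linarith)
      have ht0 : 0 < t := lt_of_lt_of_le hp hpt
      have hD : 0 < d₂ - d₁ * t := hDt0 t ht0.le
      have hθ0 : 0 ≤ (q - t)/(q - p) := div_nonneg (by linarith) hqp.le
      have hτ0 : 0 ≤ (t - p)/(q - p) := div_nonneg (by linarith) hqp.le
      have hθτ : (q-t)/(q-p) + (t-p)/(q-p) = 1 := by
        rw [← add_div, div_eq_one_iff_eq hqp.ne']; ring
      have hcc := (Real.concaveOn_rpow hc0.le hc1.le).2 (mem_Ici.2 hp.le) (mem_Ici.2 hq.le) hθ0 hτ0 hθτ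
      simp only [smul_eq_mul] at hcc
      have hmx : (q-t)/(q-p) * p + (t-p)/(q-p) * q = t := by
        field_simp
        ring
      rw [hmx] at hcc
      have hDt : d₂ - d₁ * t = q ^ (-(a₂/β)) * (q - t) + p ^ (-(a₂/β)) * (t - p) := by
        rw [hd₁, hd₂, hq1, hp1]; ring
      have e1 : q ^ (a₂/β) * q ^ (-(a₂/β)) = 1 := by rw [← Real.rpow_add hq]; norm_num
      have e2 : p ^ (a₂/β) * p ^ (-(a₂/β)) = 1 := by rw [← Real.rpow_add hp]; norm_num
      have step2 : lam ^ (1/β) * (d₂ - d₁ * t) ≤ t ^ (a₂/β) := by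
        rw [hlamroot, hDt]
        calc p^(a₂/β)*q^(a₂/β)/(q-p) * (q^(-(a₂/β))*(q-t) + p^(-(a₂/β))*(t-p))
            = (q-t)/(q-p)*p^(a₂/β) + (t-p)/(q-p)*q^(a₂/β) := by
              linear_combination ((q-t) * p^(a₂/β)/(q-p)) * e1 + ((t-p) * q^(a₂/β)/(q-p)) * e2
          _ ≤ t ^ (a₂/β) := hcc
      have hs_eq : d₂ * x₁ - d₁ * x₂ = (d₂ - d₁ * t) * x₁ := by rw [hx2t]; ring
      have hL : lam * (d₂*x₁ - d₁*x₂)^β = (lam^(1/β) * (d₂ - d₁*t))^β * x₁^β := by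
        rw [hs_eq, Real.mul_rpow hD.le hx₁p.le,
            Real.mul_rpow (by positivity) hD.le, ← Real.rpow_mul hlam0.le, hβinv, Real.rpow_one]
        ring
      have hR : x₁ ^ a₁ * x₂ ^ a₂ = t ^ a₂ * x₁ ^ β := by
        rw [hx2t, Real.mul_rpow ht0.le hx₁p.le,
            show x₁ ^ a₁ * (t ^ a₂ * x₁ ^ a₂) = t ^ a₂ * (x₁ ^ a₁ * x₁ ^ a₂) by ring,
            ← Real.rpow_add hx₁p, ← hβ]
      rw [hL, hR]
      have h5 : (lam^(1/β)*(d₂-d₁*t))^β ≤ (t^(a₂/β))^β :=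
        Real.rpow_le_rpow (by positivity) step2 hβ0.le
      rw [← Real.rpow_mul ht0.le, div_mul_cancel₀ _ hβ0.ne'] at h5
      exact mul_le_mul_of_nonneg_right h5 (Real.rpow_nonneg hx₁p.le β)
  apply Set.Subset.antisymm
  · apply convexHull_min
    · -- S ⊆ H
      rintro ⟨⟨x₁, x₂⟩, z⟩ ⟨⟨⟨h01, h02⟩, ⟨hfl, hfu⟩, hcp, hcq⟩, hz⟩
      have hks := hK x₁ x₂ h01 h02 hcp hcq
      have hs0 : 0 ≤ d₂ * x₁ - d₁ * x₂ := by
        linarith [mul_nonneg hd₂0.le h01, mul_nonpos_of_nonpos_of_nonneg hd₁0.le h02]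
      have h1 : (d₂ * x₁ - d₁ * x₂) ^ β ≤ u / lam := by
        rw [le_div_iff₀ hlam0]; linarith [hks, hfu]
      have hsB : d₂ * x₁ - d₁ * x₂ ≤ su := by
        calc d₂ * x₁ - d₁ * x₂ = ((d₂ * x₁ - d₁ * x₂) ^ β) ^ (1/β) := by
              rw [← Real.rpow_mul hs0, hβinv', Real.rpow_one]
          _ ≤ (u / lam) ^ (1/β) := Real.rpow_le_rpow (Real.rpow_nonneg hs0 β) h1 (by positivity)
      refine ⟨⟨⟨h01, h02⟩, ⟨hcp, hcq⟩, hfl, hsB⟩, ?_, le_trans hfl hz⟩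
      rcases le_total (d₂ * x₁ - d₁ * x₂) sl with hc | hc
      · have h2 : ζ * (d₂ * x₁ - d₁ * x₂) ≤ ζ * sl := mul_le_mul_of_nonneg_left hc hζ0.le
        linarith
      · have h3 := hchordφ (d₂ * x₁ - d₁ * x₂) hc hsB
        linarith
    · -- Convex H
      rintro ⟨⟨x₁, x₂⟩, z⟩ ⟨⟨⟨hx1, hx2⟩, ⟨hw1, hw2⟩, hfxl, hsx⟩, hzx, hzx'⟩ ⟨⟨y₁, y₂⟩, w⟩
        ⟨⟨⟨hy1, hy2⟩, ⟨hv1, hv2⟩, hfyl, hsy⟩, hzy, hzy'⟩ a b ha hb hab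
      have hre : a • (((x₁, x₂), z) : (ℝ × ℝ) × ℝ) + b • (((y₁, y₂), w) : (ℝ × ℝ) × ℝ)
          = ((a * x₁ + b * y₁, a * x₂ + b * y₂), a * z + b * w) := by
        simp only [Prod.smul_mk, smul_eq_mul, Prod.mk_add_mk]
      rw [hre]
      simp only [Set.mem_setOf_eq]
      refine ⟨⟨⟨add_nonneg (mul_nonneg ha hx1) (mul_nonneg hb hy1),
          add_nonneg (mul_nonneg ha hx2) (mul_nonneg hb hy2)⟩, ⟨?_, ?_⟩, ?_, ?_⟩, ?_, ?_⟩
      · linarith only [mul_le_mul_of_nonneg_left hw1 ha, mul_le_mul_of_nonneg_left hv1 hb]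
      · linarith only [mul_le_mul_of_nonneg_left hw2 ha, mul_le_mul_of_nonneg_left hv2 hb]
      · exact amgm_level ha₁ ha₂ hℓ hx1 hx2 hy1 hy2 ha hb hab hfxl hfyl
      · calc d₂ * (a * x₁ + b * y₁) - d₁ * (a * x₂ + b * y₂)
            = a * (d₂ * x₁ - d₁ * x₂) + b * (d₂ * y₁ - d₁ * y₂) := by ring
          _ ≤ a * su + b * su :=
            add_le_add (mul_le_mul_of_nonneg_left hsx ha) (mul_le_mul_of_nonneg_left hsy hb)
          _ = su := by rw [← add_mul, hab, one_mul]
      · calc ζ * (d₂ * (a * x₁ + b * y₁) - d₁ * (a * x₂ + b * y₂)) + z₀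
            = a * (ζ * (d₂ * x₁ - d₁ * x₂) + z₀) + b * (ζ * (d₂ * y₁ - d₁ * y₂) + z₀) := by
              linear_combination (-z₀) * hab
          _ ≤ a * z + b * w :=
            add_le_add (mul_le_mul_of_nonneg_left hzx ha) (mul_le_mul_of_nonneg_left hzy hb)
      · calc ℓ = a * ℓ + b * ℓ := by rw [← add_mul, hab, one_mul]
          _ ≤ a * z + b * w :=
            add_le_add (mul_le_mul_of_nonneg_left hzx' ha) (mul_le_mul_of_nonneg_left hzy' hb)
  · -- H ⊆ convexHull S
    rintro ⟨⟨x₁, x₂⟩, z⟩ ⟨⟨⟨h01, h02⟩, ⟨hcp, hcq⟩, hfl, hsB⟩, hzc, hzl⟩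
    have hx₁p : 0 < x₁ := by
      rcases eq_or_lt_of_le h01 with h0 | h
      · exfalso
        rw [← h0, Real.zero_rpow ha₁.ne', zero_mul] at hfl
        linarith only [hℓ, hfl]
      · exact h
    have hx₂p : 0 < x₂ := lt_of_lt_of_le (by positivity) hcp
    set t := x₂ / x₁ with htdef
    have hx2t : x₂ = t * x₁ := by rw [htdef, div_mul_cancel₀ _ hx₁p.ne']
    have hpt : p ≤ t := (le_div_iff₀ hx₁p).2 (by linarith only [hcp])
    have htq : t ≤ q := (div_le_iff₀ hx₁p).2 (by linarith only [hcq])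
    have ht0 : 0 < t := lt_of_lt_of_le hp hpt
    have hDtt : 0 < d₂ - d₁ * t := hDt0 t ht0.le
    set s := d₂ * x₁ - d₁ * x₂ with hsdef
    have hs0 : 0 < s := by
      rw [hsdef]
      linarith only [mul_pos hd₂0 hx₁p, mul_neg_of_neg_of_pos hd₁0 hx₂p]
    have hsx : s = (d₂ - d₁ * t) * x₁ := by rw [hsdef, hx2t]; ring
    have hx1s : x₁ = s / (d₂ - d₁ * t) := by
      rw [hsx, mul_div_cancel_left₀ _ hDtt.ne']
    have hx2s : x₂ = s * t / (d₂ - d₁ * t) := by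
      rw [hsx, hx2t]; rw [eq_div_iff hDtt.ne']; ring
    rcases le_total s sl with hcase | hcase
    · -- IVT case : s ≤ sl
      set F : ℝ → ℝ := fun r => s ^ β * (r ^ a₂ / (d₂ - d₁ * r) ^ β) with hF
      have hFcont : ContinuousOn F (Icc p q) := by
        apply ContinuousOn.mul continuousOn_const
        apply ContinuousOn.div
        · exact continuousOn_id.rpow_const fun r hr => Or.inl (ne_of_gt (lt_of_lt_of_le hp hr.1))
        · exact (continuousOn_const.sub (continuousOn_const.mul continuousOn_id)).rpow_const
            fun r hr => Or.inr hβ0.le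
        · intro r hr
          exact ne_of_gt (Real.rpow_pos_of_pos (hDt0 r (le_trans hp.le hr.1)) β)
      have hFp : F p ≤ ℓ := by
        have he : F p = lam * s ^ β := by simp only [hF]; rw [hlam]; ring
        rw [he, ← hslβ]
        exact mul_le_mul_of_nonneg_left (Real.rpow_le_rpow hs0.le hcase hβ0.le) hlam0.le
      have hFq : F q ≤ ℓ := by
        have he : F q = lam * s ^ β := by simp only [hF]; rw [hlamq]; ring
        rw [he, ← hslβ]
        exact mul_le_mul_of_nonneg_left (Real.rpow_le_rpow hs0.le hcase hβ0.le) hlam0.le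
      have hFt : ℓ ≤ F t := by
        have he : F t = x₁ ^ a₁ * x₂ ^ a₂ := by
          simp only [hF]
          rw [← hf_ray t s ht0 hs0, ← hx1s, ← hx2s]
        rw [he]; exact hfl
      obtain ⟨t₁, ht₁m, hFt₁⟩ :=
        intermediate_value_Icc hpt (hFcont.mono (Icc_subset_Icc le_rfl htq)) ⟨hFp, hFt⟩
      obtain ⟨t₂, ht₂m, hFt₂⟩ :=
        intermediate_value_Icc' htq (hFcont.mono (Icc_subset_Icc hpt le_rfl)) ⟨hFq, hFt⟩
      have hpt₁ : p ≤ t₁ := ht₁m.1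
      have ht₁t : t₁ ≤ t := ht₁m.2
      have htt₂ : t ≤ t₂ := ht₂m.1
      have ht₂q : t₂ ≤ q := ht₂m.2
      have ht₁0 : 0 < t₁ := lt_of_lt_of_le hp hpt₁
      have ht₂0 : 0 < t₂ := lt_of_lt_of_le ht0 htt₂
      have hE : ∀ r : ℝ, p ≤ r → r ≤ q → F r = ℓ →
          (((s / (d₂ - d₁ * r), s * r / (d₂ - d₁ * r)), z) : (ℝ × ℝ) × ℝ) ∈
          {xz : (ℝ × ℝ) × ℝ |
            ((0 ≤ xz.1.1 ∧ 0 ≤ xz.1.2) ∧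
              (ℓ ≤ xz.1.1 ^ a₁ * xz.1.2 ^ a₂ ∧ xz.1.1 ^ a₁ * xz.1.2 ^ a₂ ≤ u) ∧
              (p * xz.1.1 ≤ xz.1.2 ∧ xz.1.2 ≤ q * xz.1.1)) ∧
            xz.1.1 ^ a₁ * xz.1.2 ^ a₂ ≤ xz.2} := by
        intro r h1 h2 h3
        have hr0 : 0 < r := lt_of_lt_of_le hp h1
        have hDr : 0 < d₂ - d₁ * r := hDt0 r hr0.le
        have hfv : (s / (d₂ - d₁ * r)) ^ a₁ * (s * r / (d₂ - d₁ * r)) ^ a₂ = ℓ := by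
          rw [hf_ray r s hr0 hs0]
          simpa only [hF] using h3
        simp only [Set.mem_setOf_eq]
        refine ⟨⟨⟨by positivity, by positivity⟩,
          ⟨le_of_eq hfv.symm, by rw [hfv]; linarith only [hℓu]⟩, ?_, ?_⟩,
          by rw [hfv]; exact hzl⟩
        · rw [show p * (s / (d₂ - d₁ * r)) = p * s / (d₂ - d₁ * r) by ring]
          exact div_le_div_of_nonneg_right
            (by linarith only [mul_le_mul_of_nonneg_left h1 hs0.le]) hDr.le
        · rw [show q * (s / (d₂ - d₁ * r)) = q * s / (d₂ - d₁ * r) by ring]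
          exact div_le_div_of_nonneg_right
            (by linarith only [mul_le_mul_of_nonneg_left h2 hs0.le]) hDr.le
      rcases eq_or_lt_of_le (le_trans ht₁t htt₂) with heq | hlt
      · have htt₁ : t = t₁ := le_antisymm (by rw [heq]; exact htt₂) ht₁t
        apply subset_convexHull ℝ _
        rw [show x₁ = s / (d₂ - d₁ * t₁) by rw [← htt₁]; exact hx1s,
            show x₂ = s * t₁ / (d₂ - d₁ * t₁) by rw [← htt₁]; exact hx2s]
        exact hE t₁ hpt₁ (le_trans ht₁t htq) hFt₁
      · have hD₁ : 0 < d₂ - d₁ * t₁ := hDt0 _ ht₁0.le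
        have hD₂ : 0 < d₂ - d₁ * t₂ := hDt0 _ ht₂0.le
        have h21 : 0 < t₂ - t₁ := by linarith only [hlt]
        have hne1 : (d₂ - d₁ * t₁) ≠ 0 := hD₁.ne'
        have hne2 : (d₂ - d₁ * t₂) ≠ 0 := hD₂.ne'
        have hnet : (d₂ - d₁ * t) ≠ 0 := hDtt.ne'
        have hne21 : (t₂ - t₁) ≠ 0 := h21.ne'
        set μ := (d₂ - d₁ * t₁) * (t₂ - t) / ((d₂ - d₁ * t) * (t₂ - t₁)) with hμdef
        set ν := (d₂ - d₁ * t₂) * (t - t₁) / ((d₂ - d₁ * t) * (t₂ - t₁)) with hνdef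
        have hμ0 : 0 ≤ μ := by
          rw [hμdef]
          exact div_nonneg (mul_nonneg hD₁.le (by linarith only [htt₂]))
            (mul_nonneg hDtt.le h21.le)
        have hν0 : 0 ≤ ν := by
          rw [hνdef]
          exact div_nonneg (mul_nonneg hD₂.le (by linarith only [ht₁t]))
            (mul_nonneg hDtt.le h21.le)
        have hsum : μ + ν = 1 := by
          rw [hμdef, hνdef, ← add_div,
            div_eq_one_iff_eq (mul_ne_zero hnet hne21)]
          ring
        refine combo_mem (subset_convexHull ℝ _ (hE t₁ hpt₁ (le_trans ht₁t htq) hFt₁))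
          (subset_convexHull ℝ _ (hE t₂ (le_trans hpt htt₂) ht₂q hFt₂)) hμ0 hν0 hsum ?_ ?_ ?_
        · show μ * (s / (d₂ - d₁ * t₁)) + ν * (s / (d₂ - d₁ * t₂)) = x₁
          rw [hμdef, hνdef, hx1s]
          field_simp
          ring
        · show μ * (s * t₁ / (d₂ - d₁ * t₁)) + ν * (s * t₂ / (d₂ - d₁ * t₂)) = x₂
          rw [hμdef, hνdef, hx2s]
          field_simp
          ring
        · show μ * z + ν * z = z
          linear_combination z * hsum
    · -- chord case : sl ≤ s
      have hRay : ∀ r σ v w : ℝ, p ≤ r → r ≤ q → 0 < σ → r ^ a₂ / (d₂ - d₁ * r) ^ β = lam →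
          lam * σ ^ β = v → ℓ ≤ v → v ≤ u → v ≤ w →
          (((σ / (d₂ - d₁ * r), σ * r / (d₂ - d₁ * r)), w) : (ℝ × ℝ) × ℝ) ∈
          {xz : (ℝ × ℝ) × ℝ |
            ((0 ≤ xz.1.1 ∧ 0 ≤ xz.1.2) ∧
              (ℓ ≤ xz.1.1 ^ a₁ * xz.1.2 ^ a₂ ∧ xz.1.1 ^ a₁ * xz.1.2 ^ a₂ ≤ u) ∧
              (p * xz.1.1 ≤ xz.1.2 ∧ xz.1.2 ≤ q * xz.1.1)) ∧
            xz.1.1 ^ a₁ * xz.1.2 ^ a₂ ≤ xz.2} := by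
        intro r σ v w h1 h2 hσ hgr hv hv1 hv2 hvw
        have hr0 : 0 < r := lt_of_lt_of_le hp h1
        have hDr : 0 < d₂ - d₁ * r := hDt0 r hr0.le
        have hfv : (σ / (d₂ - d₁ * r)) ^ a₁ * (σ * r / (d₂ - d₁ * r)) ^ a₂ = v := by
          rw [hf_ray r σ hr0 hσ, hgr, ← hv]; ring
        simp only [Set.mem_setOf_eq]
        refine ⟨⟨⟨by positivity, by positivity⟩,
          ⟨by rw [hfv]; exact hv1, by rw [hfv]; exact hv2⟩, ?_, ?_⟩,
          by rw [hfv]; exact hvw⟩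
        · rw [show p * (σ / (d₂ - d₁ * r)) = p * σ / (d₂ - d₁ * r) by ring]
          exact div_le_div_of_nonneg_right
            (by linarith only [mul_le_mul_of_nonneg_left h1 hσ.le]) hDr.le
        · rw [show q * (σ / (d₂ - d₁ * r)) = q * σ / (d₂ - d₁ * r) by ring]
          exact div_le_div_of_nonneg_right
            (by linarith only [mul_le_mul_of_nonneg_left h2 hσ.le]) hDr.le
      have hglp : p ^ a₂ / (d₂ - d₁ * p) ^ β = lam := hlam.symm
      have hglq : q ^ a₂ / (d₂ - d₁ * q) ^ β = lam := hlamq.symm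
      have hw₁ : ℓ ≤ z - ζ * (s - sl) := by
        have e : ζ * (s - sl) = ζ * s - ζ * sl := by ring
        linarith only [hzc, hζl, e]
      have hw₂ : u ≤ z + ζ * (su - s) := by
        have e : ζ * (su - s) = ζ * su - ζ * s := by ring
        linarith only [hzc, hζu, e]
      have hsusl : 0 < su - sl := by linarith only [hslsu]
      set θ := (su - s) / (su - sl) with hθdef
      set τ := (s - sl) / (su - sl) with hτdef
      have hθ0 : 0 ≤ θ := div_nonneg (by linarith only [hsB]) hsusl.le
      have hτ0 : 0 ≤ τ := div_nonneg (by linarith only [hcase]) hsusl.le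
      have hθτ : θ + τ = 1 := by
        rw [hθdef, hτdef, ← add_div, div_eq_one_iff_eq hsusl.ne']; ring
      have hDp' : 0 < d₂ - d₁ * p := hDt0 p hp.le
      have hDq' : 0 < d₂ - d₁ * q := hDt0 q hq.le
      set μ := (q * x₁ - x₂) * (d₂ - d₁ * p) / (s * (q - p)) with hμdef
      set ν := (x₂ - p * x₁) * (d₂ - d₁ * q) / (s * (q - p)) with hνdef
      have hμ0 : 0 ≤ μ := by
        rw [hμdef]
        exact div_nonneg (mul_nonneg (by linarith only [hcq]) hDp'.le) (mul_pos hs0 hqp).le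
      have hν0 : 0 ≤ ν := by
        rw [hνdef]
        exact div_nonneg (mul_nonneg (by linarith only [hcp]) hDq'.le) (mul_pos hs0 hqp).le
      have hsne : s ≠ 0 := hs0.ne'
      have hsum : μ + ν = 1 := by
        rw [hμdef, hνdef, ← add_div, div_eq_one_iff_eq (mul_ne_zero hsne hqp.ne')]
        rw [hsdef]; ring
      refine combo_mem (A := ((s / (d₂ - d₁ * p), s * p / (d₂ - d₁ * p)), z))
        (B := ((s / (d₂ - d₁ * q), s * q / (d₂ - d₁ * q)), z)) ?_ ?_ hμ0 hν0 hsum ?_ ?_ ?_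
      · refine combo_mem
          (subset_convexHull ℝ _ (hRay p sl ℓ (z - ζ * (s - sl)) le_rfl hpq.le hsl0 hglp hslβ
            le_rfl hℓu.le hw₁))
          (subset_convexHull ℝ _ (hRay p su u (z + ζ * (su - s)) le_rfl hpq.le hsu0 hglp hsuβ
            hℓu.le le_rfl hw₂)) hθ0 hτ0 hθτ ?_ ?_ ?_
        · show θ * (sl / (d₂ - d₁ * p)) + τ * (su / (d₂ - d₁ * p)) = s / (d₂ - d₁ * p)
          rw [hθdef, hτdef]; field_simp; ring
        · show θ * (sl * p / (d₂ - d₁ * p)) + τ * (su * p / (d₂ - d₁ * p)) = s * p / (d₂ - d₁ * p)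
          rw [hθdef, hτdef]; field_simp; ring
        · show θ * (z - ζ * (s - sl)) + τ * (z + ζ * (su - s)) = z
          rw [hθdef, hτdef]; field_simp; ring
      · refine combo_mem
          (subset_convexHull ℝ _ (hRay q sl ℓ (z - ζ * (s - sl)) hpq.le le_rfl hsl0 hglq hslβ
            le_rfl hℓu.le hw₁))
          (subset_convexHull ℝ _ (hRay q su u (z + ζ * (su - s)) hpq.le le_rfl hsu0 hglq hsuβ
            hℓu.le le_rfl hw₂)) hθ0 hτ0 hθτ ?_ ?_ ?_
        · show θ * (sl / (d₂ - d₁ * q)) + τ * (su / (d₂ - d₁ * q)) = s / (d₂ - d₁ * q)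
          rw [hθdef, hτdef]; field_simp; ring
        · show θ * (sl * q / (d₂ - d₁ * q)) + τ * (su * q / (d₂ - d₁ * q)) = s * q / (d₂ - d₁ * q)
          rw [hθdef, hτdef]; field_simp; ring
        · show θ * (z - ζ * (s - sl)) + τ * (z + ζ * (su - s)) = z
          rw [hθdef, hτdef]; field_simp; ring
      · show μ * (s / (d₂ - d₁ * p)) + ν * (s / (d₂ - d₁ * q)) = x₁
        rw [hμdef, hνdef]
        rw [hsdef]
        have hsne' : d₂ * x₁ - d₁ * x₂ ≠ 0 := by rw [← hsdef]; exact hsne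
        rw [div_mul_div_comm, div_mul_div_comm, div_add_div _ _ (mul_ne_zero (mul_ne_zero hsne' hqp.ne') hDp'.ne') (mul_ne_zero (mul_ne_zero hsne' hqp.ne') hDq'.ne'), div_eq_iff (mul_ne_zero (mul_ne_zero (mul_ne_zero hsne' hqp.ne') hDp'.ne') (mul_ne_zero (mul_ne_zero hsne' hqp.ne') hDq'.ne'))]
        ring
      · show μ * (s * p / (d₂ - d₁ * p)) + ν * (s * q / (d₂ - d₁ * q)) = x₂
        rw [hμdef, hνdef]
        rw [hsdef]
        have hsne' : d₂ * x₁ - d₁ * x₂ ≠ 0 := by rw [← hsdef]; exact hsne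
        rw [div_mul_div_comm, div_mul_div_comm, div_add_div _ _ (mul_ne_zero (mul_ne_zero hsne' hqp.ne') hDp'.ne') (mul_ne_zero (mul_ne_zero hsne' hqp.ne') hDq'.ne'), div_eq_iff (mul_ne_zero (mul_ne_zero (mul_ne_zero hsne' hqp.ne') hDp'.ne') (mul_ne_zero (mul_ne_zero hsne' hqp.ne') hDq'.ne'))]
        ring
      · show μ * z + ν * z = z
        linear_combination z * hsum
end
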